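/- Let A be a DG Poisson Hopf algebra with bracket of degree 0 and antipode S. Then S({a,b}) = (-1)^{|a||b|}{S(b), S(a)} = -{S(a), S(b)} for all homogeneous a, b ∈ A, i.e., the antipode is a graded Poisson anti-homomorphism. -/

import Mathlib

open TensorProduct

namespace DGPH

variable {k : Type} [Field k]

/-- The `n`-th graded piece of the induced grading on a tensor product of graded modules. -/
def tgrade {M N : Type} [AddCommGroup M] [Module k M] [AddCommGroup N] [Module k N]
    (𝒜 : ℤ → Submodule k M) (ℬ : ℤ → Submodule k N) (n : ℤ) : Submodule k (M ⊗[k] N) :=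
  ⨆ ij : {q : ℤ × ℤ // q.1 + q.2 = n},
    Submodule.span k
      (Set.image2 (fun a b => a ⊗ₜ[k] b) ((𝒜 ij.1.1 : Set M)) ((ℬ ij.1.2 : Set N)))

/-- Characterization of the Koszul-signed multiplication on a tensor product:
`(a ⊗ b)(a' ⊗ b') = (-1)^{|a'||b|} (a a') ⊗ (b b')`. -/
def KoszulMulChar {M N : Type} [AddCommGroup M] [Module k M] [AddCommGroup N] [Module k N]
    (𝒜 : ℤ → Submodule k M) (ℬ : ℤ → Submodule k N)
    (mulM : M →ₗ[k] M →ₗ[k] M) (mulN : N →ₗ[k] N →ₗ[k] N)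
    (μ : (M ⊗[k] N) →ₗ[k] (M ⊗[k] N) →ₗ[k] (M ⊗[k] N)) : Prop :=
  ∀ ⦃i j : ℤ⦄ (a : M) ⦃a' : M⦄ ⦃b : N⦄ (b' : N), a' ∈ 𝒜 i → b ∈ ℬ j →
    μ (a ⊗ₜ[k] b) (a' ⊗ₜ[k] b') = ((-1 : k) ^ (i * j)) • ((mulM a a') ⊗ₜ[k] (mulN b b'))

/-- Characterization of the Koszul-signed Poisson bracket of degree `p` on a tensor product:
`{a⊗b, a'⊗b'} = (-1)^{(|a'|+p)|b|} {a,a'} ⊗ (bb') + (-1)^{(|b|+p)|a'|} (aa') ⊗ {b,b'}`. -/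
def KoszulBracketChar {M N : Type} [AddCommGroup M] [Module k M] [AddCommGroup N] [Module k N]
    (𝒜 : ℤ → Submodule k M) (ℬ : ℤ → Submodule k N)
    (mulM : M →ₗ[k] M →ₗ[k] M) (mulN : N →ₗ[k] N →ₗ[k] N)
    (brM : M →ₗ[k] M →ₗ[k] M) (brN : N →ₗ[k] N →ₗ[k] N) (p : ℤ)
    (β : (M ⊗[k] N) →ₗ[k] (M ⊗[k] N) →ₗ[k] (M ⊗[k] N)) : Prop :=
  ∀ ⦃i j : ℤ⦄ (a : M) ⦃a' : M⦄ ⦃b : N⦄ (b' : N), a' ∈ 𝒜 i → b ∈ ℬ j →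
    β (a ⊗ₜ[k] b) (a' ⊗ₜ[k] b') =
      ((-1 : k) ^ ((i + p) * j)) • ((brM a a') ⊗ₜ[k] (mulN b b')) +
      ((-1 : k) ^ ((j + p) * i)) • ((mulM a a') ⊗ₜ[k] (brN b b'))

/-- Characterization of the Koszul-signed differential on a tensor product:
`d(a ⊗ b) = d a ⊗ b + (-1)^{|a|} a ⊗ d b`. -/
def KoszulDiffChar {M N : Type} [AddCommGroup M] [Module k M] [AddCommGroup N] [Module k N]
    (𝒜 : ℤ → Submodule k M) (dM : M →ₗ[k] M) (dN : N →ₗ[k] N)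
    (D : M ⊗[k] N →ₗ[k] M ⊗[k] N) : Prop :=
  ∀ ⦃i : ℤ⦄ ⦃a : M⦄ (b : N), a ∈ 𝒜 i →
    D (a ⊗ₜ[k] b) = (dM a) ⊗ₜ[k] b + ((-1 : k) ^ i) • (a ⊗ₜ[k] (dN b))

/-- Characterization of the Koszul twist `T(a ⊗ b) = (-1)^{|a||b|} b ⊗ a`. -/
def KoszulTwistChar {M N : Type} [AddCommGroup M] [Module k M] [AddCommGroup N] [Module k N]
    (𝒜 : ℤ → Submodule k M) (ℬ : ℤ → Submodule k N)
    (T : M ⊗[k] N →ₗ[k] N ⊗[k] M) : Prop :=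
  ∀ ⦃i j : ℤ⦄ ⦃a : M⦄ ⦃b : N⦄, a ∈ 𝒜 i → b ∈ ℬ j →
    T (a ⊗ₜ[k] b) = ((-1 : k) ^ (i * j)) • (b ⊗ₜ[k] a)

section Structures

variable (k)
variable (M : Type) [AddCommGroup M] [Module k M]

/-- A `ℤ`-graded associative unital algebra, given by unbundled data. -/
structure IsGradedAlgebra (𝒜 : ℤ → Submodule k M) (mul : M →ₗ[k] M →ₗ[k] M) (one : M) :
    Prop where
  indep : iSupIndep 𝒜
  total : (⨆ i, 𝒜 i) = ⊤
  mul_mem : ∀ ⦃i j : ℤ⦄ ⦃a b : M⦄, a ∈ 𝒜 i → b ∈ 𝒜 j → mul a b ∈ 𝒜 (i + j)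
  one_mem : one ∈ 𝒜 0
  mul_assoc : ∀ a b c : M, mul (mul a b) c = mul a (mul b c)
  one_mul : ∀ a : M, mul one a = a
  mul_one : ∀ a : M, mul a one = a

/-- A differential graded algebra. -/
structure IsDGAlgebra (𝒜 : ℤ → Submodule k M) (mul : M →ₗ[k] M →ₗ[k] M) (one : M)
    (d : M →ₗ[k] M) extends IsGradedAlgebra k M 𝒜 mul one : Prop where
  d_mem : ∀ ⦃i : ℤ⦄ ⦃a : M⦄, a ∈ 𝒜 i → d a ∈ 𝒜 (i + 1)
  d_sq : ∀ a : M, d (d a) = 0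
  d_mul : ∀ ⦃i : ℤ⦄ ⦃a : M⦄ (b : M), a ∈ 𝒜 i →
    d (mul a b) = mul (d a) b + ((-1 : k) ^ i) • mul a (d b)

/-- A differential graded Poisson algebra with Poisson bracket of degree `p`. -/
structure IsDGPoisson (𝒜 : ℤ → Submodule k M) (mul : M →ₗ[k] M →ₗ[k] M) (one : M)
    (bracket : M →ₗ[k] M →ₗ[k] M) (d : M →ₗ[k] M) (p : ℤ)
    extends IsDGAlgebra k M 𝒜 mul one d : Prop where
  gcomm : ∀ ⦃i j : ℤ⦄ ⦃a b : M⦄, a ∈ 𝒜 i → b ∈ 𝒜 j →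
    mul a b = ((-1 : k) ^ (i * j)) • mul b a
  bracket_mem : ∀ ⦃i j : ℤ⦄ ⦃a b : M⦄, a ∈ 𝒜 i → b ∈ 𝒜 j → bracket a b ∈ 𝒜 (i + j + p)
  bracket_antisymm : ∀ ⦃i j : ℤ⦄ ⦃a b : M⦄, a ∈ 𝒜 i → b ∈ 𝒜 j →
    bracket a b = -(((-1 : k) ^ ((i + p) * (j + p))) • bracket b a)
  bracket_jacobi : ∀ ⦃i j : ℤ⦄ ⦃a b : M⦄ (c : M), a ∈ 𝒜 i → b ∈ 𝒜 j →
    bracket a (bracket b c) =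
      bracket (bracket a b) c + ((-1 : k) ^ ((i + p) * (j + p))) • bracket b (bracket a c)
  bracket_leibniz : ∀ ⦃i j : ℤ⦄ ⦃a b : M⦄ (c : M), a ∈ 𝒜 i → b ∈ 𝒜 j →
    bracket a (mul b c) =
      mul (bracket a b) c + ((-1 : k) ^ ((i + p) * j)) • mul b (bracket a c)
  d_bracket : ∀ ⦃i : ℤ⦄ ⦃a : M⦄ (b : M), a ∈ 𝒜 i →
    d (bracket a b) = bracket (d a) b + ((-1 : k) ^ (i + p)) • bracket a (d b)

/-- A `ℤ`-graded coalgebra, given by unbundled data. -/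
structure IsGradedCoalgebra (𝒜 : ℤ → Submodule k M) (comul : M →ₗ[k] M ⊗[k] M)
    (counit : M →ₗ[k] k) : Prop where
  comul_mem : ∀ ⦃i : ℤ⦄ ⦃a : M⦄, a ∈ 𝒜 i → comul a ∈ tgrade 𝒜 𝒜 i
  counit_zero : ∀ ⦃i : ℤ⦄ ⦃a : M⦄, a ∈ 𝒜 i → i ≠ 0 → counit a = 0
  coassoc : ∀ a : M,
    (TensorProduct.assoc k M M M) ((TensorProduct.map comul LinearMap.id) (comul a)) =
      (TensorProduct.map LinearMap.id comul) (comul a)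
  counit_comul_left : ∀ a : M,
    (TensorProduct.lid k M) ((TensorProduct.map counit LinearMap.id) (comul a)) = a
  counit_comul_right : ∀ a : M,
    (TensorProduct.rid k M) ((TensorProduct.map LinearMap.id counit) (comul a)) = a

/-- A `ℤ`-graded bialgebra (comultiplication is an algebra map for the Koszul-signed
multiplication on the tensor square). -/
structure IsGradedBialgebra (𝒜 : ℤ → Submodule k M) (mul : M →ₗ[k] M →ₗ[k] M) (one : M)
    (comul : M →ₗ[k] M ⊗[k] M) (counit : M →ₗ[k] k) : Prop where
  alg : IsGradedAlgebra k M 𝒜 mul one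
  coalg : IsGradedCoalgebra k M 𝒜 comul counit
  comul_one : comul one = one ⊗ₜ[k] one
  counit_one : counit one = 1
  counit_mul : ∀ a b : M, counit (mul a b) = counit a * counit b
  comul_mul : ∃ mul₂ : (M ⊗[k] M) →ₗ[k] (M ⊗[k] M) →ₗ[k] (M ⊗[k] M),
    KoszulMulChar 𝒜 𝒜 mul mul mul₂ ∧
      ∀ a b : M, comul (mul a b) = mul₂ (comul a) (comul b)

/-- A `ℤ`-graded Hopf algebra. -/
structure IsGradedHopf (𝒜 : ℤ → Submodule k M) (mul : M →ₗ[k] M →ₗ[k] M) (one : M)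
    (comul : M →ₗ[k] M ⊗[k] M) (counit : M →ₗ[k] k) (S : M →ₗ[k] M) : Prop where
  bialg : IsGradedBialgebra k M 𝒜 mul one comul counit
  antipode_mem : ∀ ⦃i : ℤ⦄ ⦃a : M⦄, a ∈ 𝒜 i → S a ∈ 𝒜 i
  antipode_left : ∀ a : M,
    TensorProduct.lift mul ((TensorProduct.map S LinearMap.id) (comul a)) = counit a • one
  antipode_right : ∀ a : M,
    TensorProduct.lift mul ((TensorProduct.map LinearMap.id S) (comul a)) = counit a • one

/-- `d` is a coderivation (with Koszul signs) and `ε ∘ d = 0`. -/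
def CoderivationProp (𝒜 : ℤ → Submodule k M) (comul : M →ₗ[k] M ⊗[k] M)
    (counit : M →ₗ[k] k) (d : M →ₗ[k] M) : Prop :=
  (∀ a : M, counit (d a) = 0) ∧
  ∃ D : M ⊗[k] M →ₗ[k] M ⊗[k] M, KoszulDiffChar 𝒜 d d D ∧
    ∀ a : M, comul (d a) = D (comul a)

/-- A differential graded bialgebra. -/
structure IsDGBialgebra (𝒜 : ℤ → Submodule k M) (mul : M →ₗ[k] M →ₗ[k] M) (one : M)
    (comul : M →ₗ[k] M ⊗[k] M) (counit : M →ₗ[k] k) (d : M →ₗ[k] M) : Prop where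
  bialg : IsGradedBialgebra k M 𝒜 mul one comul counit
  dga : IsDGAlgebra k M 𝒜 mul one d
  coderiv : CoderivationProp k M 𝒜 comul counit d

/-- A differential graded Hopf algebra. -/
structure IsDGHopf (𝒜 : ℤ → Submodule k M) (mul : M →ₗ[k] M →ₗ[k] M) (one : M)
    (comul : M →ₗ[k] M ⊗[k] M) (counit : M →ₗ[k] k) (d : M →ₗ[k] M) (S : M →ₗ[k] M) :
    Prop where
  dgbialg : IsDGBialgebra k M 𝒜 mul one comul counit d
  antipode_mem : ∀ ⦃i : ℤ⦄ ⦃a : M⦄, a ∈ 𝒜 i → S a ∈ 𝒜 i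
  antipode_left : ∀ a : M,
    TensorProduct.lift mul ((TensorProduct.map S LinearMap.id) (comul a)) = counit a • one
  antipode_right : ∀ a : M,
    TensorProduct.lift mul ((TensorProduct.map LinearMap.id S) (comul a)) = counit a • one

/-- A differential graded Poisson bialgebra (bracket of degree 0). -/
structure IsDGPoissonBialgebra (𝒜 : ℤ → Submodule k M) (mul : M →ₗ[k] M →ₗ[k] M) (one : M)
    (bracket : M →ₗ[k] M →ₗ[k] M) (d : M →ₗ[k] M)
    (comul : M →ₗ[k] M ⊗[k] M) (counit : M →ₗ[k] k) : Prop where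
  poisson : IsDGPoisson k M 𝒜 mul one bracket d 0
  dgbialg : IsDGBialgebra k M 𝒜 mul one comul counit d
  comul_bracket : ∃ br₂ : (M ⊗[k] M) →ₗ[k] (M ⊗[k] M) →ₗ[k] (M ⊗[k] M),
    KoszulBracketChar 𝒜 𝒜 mul mul bracket bracket 0 br₂ ∧
      ∀ a b : M, comul (bracket a b) = br₂ (comul a) (comul b)

/-- A differential graded Poisson Hopf algebra (bracket of degree 0). -/
structure IsDGPoissonHopf (𝒜 : ℤ → Submodule k M) (mul : M →ₗ[k] M →ₗ[k] M) (one : M)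
    (bracket : M →ₗ[k] M →ₗ[k] M) (d : M →ₗ[k] M)
    (comul : M →ₗ[k] M ⊗[k] M) (counit : M →ₗ[k] k) (S : M →ₗ[k] M) : Prop where
  toPoissonBialg : IsDGPoissonBialgebra k M 𝒜 mul one bracket d comul counit
  antipode_mem : ∀ ⦃i : ℤ⦄ ⦃a : M⦄, a ∈ 𝒜 i → S a ∈ 𝒜 i
  antipode_left : ∀ a : M,
    TensorProduct.lift mul ((TensorProduct.map S LinearMap.id) (comul a)) = counit a • one
  antipode_right : ∀ a : M,
    TensorProduct.lift mul ((TensorProduct.map LinearMap.id S) (comul a)) = counit a • one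

end Structures

/-- A homomorphism of differential graded algebras (unbundled data). -/
structure IsDGAlgHom {M N : Type} [AddCommGroup M] [Module k M] [AddCommGroup N] [Module k N]
    (𝒜 : ℤ → Submodule k M) (mulM : M →ₗ[k] M →ₗ[k] M) (oneM : M) (dM : M →ₗ[k] M)
    (ℬ : ℤ → Submodule k N) (mulN : N →ₗ[k] N →ₗ[k] N) (oneN : N) (dN : N →ₗ[k] N)
    (f : M →ₗ[k] N) : Prop where
  map_mem : ∀ ⦃i : ℤ⦄ ⦃a : M⦄, a ∈ 𝒜 i → f a ∈ ℬ i
  map_one : f oneM = oneN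
  map_mul : ∀ a b : M, f (mulM a b) = mulN (f a) (f b)
  map_d : ∀ a : M, f (dM a) = dN (f a)

/-- A homomorphism of differential graded Poisson algebras. -/
structure IsDGPoissonHom {M N : Type} [AddCommGroup M] [Module k M] [AddCommGroup N] [Module k N]
    (𝒜 : ℤ → Submodule k M) (mulM : M →ₗ[k] M →ₗ[k] M) (oneM : M)
    (brM : M →ₗ[k] M →ₗ[k] M) (dM : M →ₗ[k] M)
    (ℬ : ℤ → Submodule k N) (mulN : N →ₗ[k] N →ₗ[k] N) (oneN : N)
    (brN : N →ₗ[k] N →ₗ[k] N) (dN : N →ₗ[k] N)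
    (f : M →ₗ[k] N)
    extends IsDGAlgHom 𝒜 mulM oneM dM ℬ mulN oneN dN f : Prop where
  map_bracket : ∀ a b : M, f (brM a b) = brN (f a) (f b)

/-- `(E, m, h)` is the universal enveloping algebra of the DG Poisson algebra
`(A, 𝒜, mulA, oneA, brA, dA)` with bracket of degree `p`. -/
structure IsUEA {A E : Type} [AddCommGroup A] [Module k A] [AddCommGroup E] [Module k E]
    (𝒜 : ℤ → Submodule k A) (mulA : A →ₗ[k] A →ₗ[k] A) (oneA : A)
    (brA : A →ₗ[k] A →ₗ[k] A) (dA : A →ₗ[k] A) (p : ℤ)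
    (ℰ : ℤ → Submodule k E) (mulE : E →ₗ[k] E →ₗ[k] E) (oneE : E) (dE : E →ₗ[k] E)
    (m h : A →ₗ[k] E) : Prop where
  dga : IsDGAlgebra k E ℰ mulE oneE dE
  m_hom : IsDGAlgHom 𝒜 mulA oneA dA ℰ mulE oneE dE m
  h_mem : ∀ ⦃i : ℤ⦄ ⦃a : A⦄, a ∈ 𝒜 i → h a ∈ ℰ (i + p)
  h_d : ∀ a : A, h (dA a) = dE (h a)
  h_lie : ∀ ⦃i j : ℤ⦄ ⦃a b : A⦄, a ∈ 𝒜 i → b ∈ 𝒜 j →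
    h (brA a b) = mulE (h a) (h b) - ((-1 : k) ^ ((i + p) * (j + p))) • mulE (h b) (h a)
  m_bracket : ∀ ⦃i j : ℤ⦄ ⦃a b : A⦄, a ∈ 𝒜 i → b ∈ 𝒜 j →
    m (brA a b) = mulE (h a) (m b) - ((-1 : k) ^ ((i + p) * j)) • mulE (m b) (h a)
  h_mul : ∀ ⦃i j : ℤ⦄ ⦃a b : A⦄, a ∈ 𝒜 i → b ∈ 𝒜 j →
    h (mulA a b) = mulE (m a) (h b) + ((-1 : k) ^ (i * j)) • mulE (m b) (h a)
  universal : ∀ (D : Type) [AddCommGroup D] [Module k D]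
    (𝒟 : ℤ → Submodule k D) (mulD : D →ₗ[k] D →ₗ[k] D) (oneD : D) (dD : D →ₗ[k] D)
    (f g : A →ₗ[k] D),
    IsDGAlgebra k D 𝒟 mulD oneD dD →
    IsDGAlgHom 𝒜 mulA oneA dA 𝒟 mulD oneD dD f →
    (∀ ⦃i : ℤ⦄ ⦃a : A⦄, a ∈ 𝒜 i → g a ∈ 𝒟 (i + p)) →
    (∀ a : A, g (dA a) = dD (g a)) →
    (∀ ⦃i j : ℤ⦄ ⦃a b : A⦄, a ∈ 𝒜 i → b ∈ 𝒜 j →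
      g (brA a b) = mulD (g a) (g b) - ((-1 : k) ^ ((i + p) * (j + p))) • mulD (g b) (g a)) →
    (∀ ⦃i j : ℤ⦄ ⦃a b : A⦄, a ∈ 𝒜 i → b ∈ 𝒜 j →
      f (brA a b) = mulD (g a) (f b) - ((-1 : k) ^ ((i + p) * j)) • mulD (f b) (g a)) →
    (∀ ⦃i j : ℤ⦄ ⦃a b : A⦄, a ∈ 𝒜 i → b ∈ 𝒜 j →
      g (mulA a b) = mulD (f a) (g b) + ((-1 : k) ^ (i * j)) • mulD (f b) (g a)) →
    ∃! φ : E →ₗ[k] D, IsDGAlgHom ℰ mulE oneE dE 𝒟 mulD oneD dD φ ∧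
      φ ∘ₗ m = f ∧ φ ∘ₗ h = g

end DGPH

namespace DGPH

open TensorProduct

section AntipodeMachinery


variable {k : Type} [Field k] {A : Type} [AddCommGroup A] [Module k A]

lemma zpow_neg_one_mul (m n : ℤ) : ((-1 : k) ^ m) * ((-1 : k) ^ n) = (-1 : k) ^ (m + n) :=
  (zpow_add₀ (by norm_num) m n).symm

lemma zpow_reduce (m n : ℤ) : (-1 : k) ^ (m + 2 * n) = (-1 : k) ^ m := by
  have he : Even (2 * n) := even_two_mul n
  rw [zpow_add₀ (by norm_num : (-1 : k) ≠ 0), he.neg_one_zpow, mul_one]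

lemma zpow_neg_one_sq_smul {V : Type} [AddCommGroup V] [Module k V] (m : ℤ) (x : V) :
    ((-1 : k) ^ m) • ((-1 : k) ^ m) • x = x := by
  rw [smul_smul, zpow_neg_one_mul, Even.neg_one_zpow ⟨m, by ring⟩, one_smul]

variable (𝒜 : ℤ → Submodule k A)

noncomputable def gop (hI : DirectSum.IsInternal fun i => 𝒜 i) (g : ℤ → k) : A →ₗ[k] A :=
  (DirectSum.toModule k ℤ A fun i => g i • (𝒜 i).subtype) ∘ₗ
    (LinearEquiv.ofBijective (DirectSum.coeLinearMap fun i => 𝒜 i) hI).symm.toLinearMap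

variable (hI : DirectSum.IsInternal fun i => 𝒜 i)

noncomputable def tauAux : A →ₗ[k] A →ₗ[k] A ⊗[k] A :=
  (DirectSum.toModule k ℤ (A →ₗ[k] A ⊗[k] A) fun i =>
    { toFun := fun (x : 𝒜 i) => ((TensorProduct.mk k A A).flip (x : A)) ∘ₗ
        gop 𝒜 hI (fun j => (-1 : k) ^ (i * j))
      map_add' := by intro x y; ext b; simp [TensorProduct.tmul_add]
      map_smul' := by intro c x; ext b; simp [TensorProduct.tmul_smul] }) ∘ₗ
    (LinearEquiv.ofBijective (DirectSum.coeLinearMap fun i => 𝒜 i) hI).symm.toLinearMap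

noncomputable def tau : A ⊗[k] A →ₗ[k] A ⊗[k] A := TensorProduct.lift (tauAux 𝒜 hI)


lemma decomp_symm_apply {i : ℤ} {x : A} (hx : x ∈ 𝒜 i) :
    (LinearEquiv.ofBijective (DirectSum.coeLinearMap fun i => 𝒜 i) hI).symm x
      = DirectSum.of (fun i => ↥(𝒜 i)) i ⟨x, hx⟩ := by
  apply (LinearEquiv.ofBijective (DirectSum.coeLinearMap fun i => 𝒜 i) hI).injective
  rw [LinearEquiv.apply_symm_apply]
  exact (DirectSum.coeLinearMap_of (fun i => 𝒜 i) i ⟨x, hx⟩).symm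

lemma gop_apply (g : ℤ → k) {i : ℤ} {x : A} (hx : x ∈ 𝒜 i) : gop 𝒜 hI g x = g i • x := by
  have h1 := decomp_symm_apply 𝒜 hI hx
  simp only [gop, LinearMap.comp_apply, LinearEquiv.coe_coe, h1]
  rw [← DirectSum.lof_eq_of k, DirectSum.toModule_lof]
  simp

lemma tau_tmul {i j : ℤ} {a b : A} (ha : a ∈ 𝒜 i) (hb : b ∈ 𝒜 j) :
    tau 𝒜 hI (a ⊗ₜ[k] b) = ((-1 : k) ^ (i * j)) • (b ⊗ₜ[k] a) := by
  have h1 := decomp_symm_apply 𝒜 hI ha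
  simp only [tau, tauAux, TensorProduct.lift.tmul, LinearMap.comp_apply, LinearEquiv.coe_coe, h1]
  rw [← DirectSum.lof_eq_of k, DirectSum.toModule_lof]
  simp only [LinearMap.coe_mk, AddHom.coe_mk, LinearMap.comp_apply]
  rw [gop_apply 𝒜 hI _ hb]
  simp [TensorProduct.smul_tmul']

variable (R : Type) [AddCommGroup R] [Module k R]

noncomputable def hswap : A ⊗[k] (A ⊗[k] R) →ₗ[k] A ⊗[k] (A ⊗[k] R) :=
  (TensorProduct.assoc k A A R).toLinearMap ∘ₗ (LinearMap.rTensor R (tau 𝒜 hI)) ∘ₗ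
    (TensorProduct.assoc k A A R).symm.toLinearMap

lemma hswap_tmul {i j : ℤ} {a b : A} (ha : a ∈ 𝒜 i) (hb : b ∈ 𝒜 j) (r : R) :
    hswap 𝒜 hI R (a ⊗ₜ[k] (b ⊗ₜ[k] r)) = ((-1 : k) ^ (i * j)) • (b ⊗ₜ[k] (a ⊗ₜ[k] r)) := by
  simp only [hswap, LinearMap.comp_apply, LinearEquiv.coe_coe, TensorProduct.assoc_symm_tmul,
    LinearMap.rTensor_tmul, tau_tmul 𝒜 hI ha hb]
  rw [← TensorProduct.smul_tmul', map_smul, TensorProduct.assoc_tmul]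


noncomputable def phi : (A ⊗[k] A) ⊗[k] (A ⊗[k] A) →ₗ[k] (A ⊗[k] A) ⊗[k] (A ⊗[k] A) :=
  (TensorProduct.assoc k A A (A ⊗[k] A)).symm.toLinearMap ∘ₗ
    LinearMap.lTensor A (hswap 𝒜 hI A) ∘ₗ (TensorProduct.assoc k A A (A ⊗[k] A)).toLinearMap

lemma phi_tmul {j q : ℤ} {x y u v : A} (hy : y ∈ 𝒜 j) (hu : u ∈ 𝒜 q) :
    phi 𝒜 hI ((x ⊗ₜ[k] y) ⊗ₜ[k] (u ⊗ₜ[k] v))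
      = ((-1 : k) ^ (j * q)) • ((x ⊗ₜ[k] u) ⊗ₜ[k] (y ⊗ₜ[k] v)) := by
  simp only [phi, LinearMap.comp_apply, LinearEquiv.coe_coe, TensorProduct.assoc_tmul,
    LinearMap.lTensor_tmul, hswap_tmul 𝒜 hI A hy hu v, TensorProduct.tmul_smul, map_smul,
    TensorProduct.assoc_symm_tmul]

noncomputable def q6 :
    (A ⊗[k] (A ⊗[k] A)) ⊗[k] (A ⊗[k] (A ⊗[k] A)) →ₗ[k]
      (A ⊗[k] A) ⊗[k] ((A ⊗[k] A) ⊗[k] (A ⊗[k] A)) :=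
  ((TensorProduct.congr (LinearEquiv.refl k (A ⊗[k] A))
      (TensorProduct.assoc k A A (A ⊗[k] A)).symm).toLinearMap ∘ₗ
    (TensorProduct.assoc k A A (A ⊗[k] (A ⊗[k] (A ⊗[k] A)))).symm.toLinearMap) ∘ₗ
  (LinearMap.lTensor A (LinearMap.lTensor A (LinearMap.lTensor A (hswap 𝒜 hI A))) ∘ₗ
    LinearMap.lTensor A (hswap 𝒜 hI (A ⊗[k] (A ⊗[k] A))) ∘ₗ
    LinearMap.lTensor A (LinearMap.lTensor A (hswap 𝒜 hI (A ⊗[k] A)))) ∘ₗ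
  ((TensorProduct.congr (LinearEquiv.refl k A)
      (TensorProduct.assoc k A A (A ⊗[k] (A ⊗[k] A)))).toLinearMap ∘ₗ
    (TensorProduct.assoc k A (A ⊗[k] A) (A ⊗[k] (A ⊗[k] A))).toLinearMap)

lemma q6_tmul {jy jz ju jv : ℤ} {x y z u v w : A} (hy : y ∈ 𝒜 jy) (hz : z ∈ 𝒜 jz)
    (hu : u ∈ 𝒜 ju) (hv : v ∈ 𝒜 jv) :
    q6 𝒜 hI ((x ⊗ₜ[k] (y ⊗ₜ[k] z)) ⊗ₜ[k] (u ⊗ₜ[k] (v ⊗ₜ[k] w)))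
      = ((-1 : k) ^ (jz * ju + jy * ju + jz * jv)) •
          ((x ⊗ₜ[k] u) ⊗ₜ[k] ((y ⊗ₜ[k] v) ⊗ₜ[k] (z ⊗ₜ[k] w))) := by
  simp only [q6, LinearMap.comp_apply, LinearEquiv.coe_coe, TensorProduct.assoc_tmul,
    TensorProduct.congr_tmul, LinearEquiv.refl_apply, LinearMap.lTensor_tmul]
  rw [hswap_tmul 𝒜 hI _ hz hu (v ⊗ₜ[k] w)]
  simp only [TensorProduct.tmul_smul, map_smul, LinearMap.lTensor_tmul]
  rw [hswap_tmul 𝒜 hI _ hy hu (z ⊗ₜ[k] (v ⊗ₜ[k] w))]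
  simp only [TensorProduct.tmul_smul, map_smul, LinearMap.lTensor_tmul]
  rw [hswap_tmul 𝒜 hI _ hz hv w]
  simp only [TensorProduct.tmul_smul, map_smul, LinearEquiv.coe_coe,
    TensorProduct.assoc_symm_tmul, TensorProduct.congr_tmul, LinearEquiv.refl_apply]
  rw [smul_smul, smul_smul, zpow_neg_one_mul, zpow_neg_one_mul]


lemma tgrade_rep {x : A ⊗[k] A} {n : ℤ} (hx : x ∈ tgrade 𝒜 𝒜 n) :
    ∃ (m : ℕ) (p : Fin m → ℤ) (u v : Fin m → A),
      (∀ t, u t ∈ 𝒜 (p t)) ∧ (∀ t, v t ∈ 𝒜 (n - p t)) ∧ x = ∑ t, u t ⊗ₜ[k] v t := by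
  have hx' : x ∈ Submodule.span k
      {w : A ⊗[k] A | ∃ (p : ℤ) (a b : A), a ∈ 𝒜 p ∧ b ∈ 𝒜 (n - p) ∧ w = a ⊗ₜ[k] b} := by
    refine iSup_le (α := Submodule k (A ⊗[k] A)) (fun ij => Submodule.span_le.mpr ?_) hx
    rintro w ⟨a, ha, b, hb, rfl⟩
    refine Submodule.subset_span ⟨ij.1.1, a, b, ha, ?_, rfl⟩
    have : n - ij.1.1 = ij.1.2 := by have := ij.2; omega
    rwa [this]
  clear hx
  induction hx' using Submodule.span_induction with
  | mem w hw =>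
    obtain ⟨p, a, b, ha, hb, rfl⟩ := hw
    exact ⟨1, fun _ => p, fun _ => a, fun _ => b, fun _ => ha, fun _ => hb, by simp⟩
  | zero => exact ⟨0, Fin.elim0, Fin.elim0, Fin.elim0, fun t => t.elim0, fun t => t.elim0, by simp⟩
  | add w₁ w₂ _ _ ih₁ ih₂ =>
    obtain ⟨m₁, p₁, u₁, v₁, hu₁, hv₁, rfl⟩ := ih₁
    obtain ⟨m₂, p₂, u₂, v₂, hu₂, hv₂, rfl⟩ := ih₂
    refine ⟨m₁ + m₂, Fin.append p₁ p₂, Fin.append u₁ u₂, Fin.append v₁ v₂, ?_, ?_, ?_⟩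
    · intro t
      refine Fin.addCases (fun i => ?_) (fun i => ?_) t
      · simpa [Fin.append_left] using hu₁ i
      · simpa [Fin.append_right] using hu₂ i
    · intro t
      refine Fin.addCases (fun i => ?_) (fun i => ?_) t
      · simpa [Fin.append_left] using hv₁ i
      · simpa [Fin.append_right] using hv₂ i
    · rw [Fin.sum_univ_add]
      simp [Fin.append_left, Fin.append_right]
  | smul c w _ ih =>
    obtain ⟨m, p, u, v, hu, hv, rfl⟩ := ih
    refine ⟨m, p, fun t => c • u t, v, fun t => Submodule.smul_mem _ _ (hu t), hv, ?_⟩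
    rw [Finset.smul_sum]
    exact Finset.sum_congr rfl fun t _ => (TensorProduct.smul_tmul' c _ _).symm


lemma map_ext_homog (htot : (⨆ i, 𝒜 i) = ⊤) {V : Type} [AddCommGroup V] [Module k V]
    {f g : A →ₗ[k] V} (h : ∀ ⦃i : ℤ⦄ ⦃a : A⦄, a ∈ 𝒜 i → f a = g a) : f = g := by
  ext a
  have ha : a ∈ (⨆ i, 𝒜 i) := htot ▸ Submodule.mem_top
  refine Submodule.iSup_induction (motive := fun a => f a = g a) _ ha (fun i x hx => h hx) (by simp) ?_
  intro x y ihx ihy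
  simp [map_add, ihx, ihy]

lemma ext_homog (htot : (⨆ i, 𝒜 i) = ⊤) {V : Type} [AddCommGroup V] [Module k V]
    {f g : A ⊗[k] A →ₗ[k] V}
    (h : ∀ ⦃i j : ℤ⦄ ⦃a b : A⦄, a ∈ 𝒜 i → b ∈ 𝒜 j → f (a ⊗ₜ[k] b) = g (a ⊗ₜ[k] b)) : f = g := by
  apply TensorProduct.ext'
  intro a b
  have ha : a ∈ (⨆ i, 𝒜 i) := htot ▸ Submodule.mem_top
  have hb : b ∈ (⨆ i, 𝒜 i) := htot ▸ Submodule.mem_top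
  refine Submodule.iSup_induction (motive := fun a => f (a ⊗ₜ[k] b) = g (a ⊗ₜ[k] b)) _ ha ?_ ?_ ?_
  · intro i x hx
    refine Submodule.iSup_induction (motive := fun b => f (x ⊗ₜ[k] b) = g (x ⊗ₜ[k] b)) _ hb
      (fun j y hy => h hx hy) (by simp [TensorProduct.tmul_zero]) ?_
    intro y z ihy ihz
    rw [TensorProduct.tmul_add, map_add, map_add, ihy, ihz]
  · simp [TensorProduct.zero_tmul]
  · intro x y ihx ihy
    rw [TensorProduct.add_tmul, map_add, map_add, ihx, ihy]


section Core

variable (mul : A →ₗ[k] A →ₗ[k] A) (one : A) (bracket : A →ₗ[k] A →ₗ[k] A)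
variable (comul : A →ₗ[k] A ⊗[k] A) (counit : A →ₗ[k] k) (S : A →ₗ[k] A)

noncomputable def DC : A ⊗[k] A →ₗ[k] (A ⊗[k] A) ⊗[k] (A ⊗[k] A) :=
  phi 𝒜 hI ∘ₗ TensorProduct.map comul comul

noncomputable def conv (f g : A ⊗[k] A →ₗ[k] A) : A ⊗[k] A →ₗ[k] A :=
  TensorProduct.lift mul ∘ₗ TensorProduct.map f g ∘ₗ DC 𝒜 hI comul

noncomputable def EE : A ⊗[k] A →ₗ[k] A :=
  (LinearMap.toSpanSingleton k A one) ∘ₗ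
    TensorProduct.lift ((LinearMap.mul k k).compl₁₂ counit counit)

lemma EE_tmul (a b : A) : EE one counit (a ⊗ₜ[k] b) = (counit a * counit b) • one := by
  simp [EE, LinearMap.toSpanSingleton]

lemma crep (Hcm : ∀ ⦃i : ℤ⦄ ⦃a : A⦄, a ∈ 𝒜 i → comul a ∈ tgrade 𝒜 𝒜 i)
    {α : ℤ} {a : A} (ha : a ∈ 𝒜 α) :
    ∃ (m : ℕ) (p : Fin m → ℤ) (x y : Fin m → A),
      (∀ t, x t ∈ 𝒜 (p t)) ∧ (∀ t, y t ∈ 𝒜 (α - p t)) ∧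
        comul a = ∑ t, x t ⊗ₜ[k] y t :=
  tgrade_rep 𝒜 (Hcm ha)

lemma ccl (Hcl : ∀ a : A,
      (TensorProduct.lid k A) ((TensorProduct.map counit LinearMap.id) (comul a)) = a)
    {a : A} {m : ℕ} {x y : Fin m → A} (hrep : comul a = ∑ t, x t ⊗ₜ[k] y t) :
    ∑ t, counit (x t) • y t = a := by
  have := Hcl a
  rw [hrep, map_sum, map_sum] at this
  simpa using this

lemma ccr (Hcr : ∀ a : A,
      (TensorProduct.rid k A) ((TensorProduct.map LinearMap.id counit) (comul a)) = a)
    {a : A} {m : ℕ} {x y : Fin m → A} (hrep : comul a = ∑ t, x t ⊗ₜ[k] y t) :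
    ∑ t, counit (y t) • x t = a := by
  have := Hcr a
  rw [hrep, map_sum, map_sum] at this
  simpa using this

lemma scl (HSl : ∀ a : A,
      TensorProduct.lift mul ((TensorProduct.map S LinearMap.id) (comul a)) = counit a • one)
    {a : A} {m : ℕ} {x y : Fin m → A} (hrep : comul a = ∑ t, x t ⊗ₜ[k] y t) :
    ∑ t, mul (S (x t)) (y t) = counit a • one := by
  have := HSl a
  rw [hrep, map_sum, map_sum] at this
  simpa using this

lemma scr (HSr : ∀ a : A,
      TensorProduct.lift mul ((TensorProduct.map LinearMap.id S) (comul a)) = counit a • one)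
    {a : A} {m : ℕ} {x y : Fin m → A} (hrep : comul a = ∑ t, x t ⊗ₜ[k] y t) :
    ∑ t, mul (x t) (S (y t)) = counit a • one := by
  have := HSr a
  rw [hrep, map_sum, map_sum] at this
  simpa using this

/-- sign killing against a counit factor -/
lemma sk (Hcz : ∀ ⦃i : ℤ⦄ ⦃a : A⦄, a ∈ 𝒜 i → i ≠ 0 → counit a = 0)
    {q : ℤ} {u : A} (hu : u ∈ 𝒜 q) (r : ℤ) {V : Type} [AddCommGroup V] [Module k V] (w : V) :
    (-1 : k) ^ (q * r) • (counit u • w) = counit u • w := by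
  by_cases hq : q = 0
  · simp [hq]
  · rw [Hcz hu hq]; simp

lemma sk' (Hcz : ∀ ⦃i : ℤ⦄ ⦃a : A⦄, a ∈ 𝒜 i → i ≠ 0 → counit a = 0)
    {q : ℤ} {u : A} (hu : u ∈ 𝒜 q) (r : ℤ) {V : Type} [AddCommGroup V] [Module k V] (w : V) :
    (-1 : k) ^ (r * q) • (counit u • w) = counit u • w := by
  rw [mul_comm]; exact sk 𝒜 counit Hcz hu r w

lemma DC_tmul {a b : A} {m m' : ℕ}
    {p' : Fin m → ℤ} {x y : Fin m → A}
    {q : Fin m' → ℤ} {u v : Fin m' → A}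
    (hy : ∀ t, y t ∈ 𝒜 (p' t)) (hu : ∀ t, u t ∈ 𝒜 (q t))
    (hrepa : comul a = ∑ t, x t ⊗ₜ[k] y t) (hrepb : comul b = ∑ t, u t ⊗ₜ[k] v t) :
    DC 𝒜 hI comul (a ⊗ₜ[k] b) =
      ∑ s, ∑ t, ((-1 : k) ^ (p' s * q t)) •
        ((x s ⊗ₜ[k] u t) ⊗ₜ[k] (y s ⊗ₜ[k] v t)) := by
  simp only [DC, LinearMap.comp_apply, TensorProduct.map_tmul, hrepa, hrepb]
  rw [TensorProduct.sum_tmul, map_sum]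
  refine Finset.sum_congr rfl fun s _ => ?_
  rw [TensorProduct.tmul_sum, map_sum]
  exact Finset.sum_congr rfl fun t _ => phi_tmul 𝒜 hI (hy s) (hu t)

lemma conv_tmul (f g : A ⊗[k] A →ₗ[k] A) {a b : A} {m m' : ℕ}
    {p' : Fin m → ℤ} {x y : Fin m → A}
    {q : Fin m' → ℤ} {u v : Fin m' → A}
    (hy : ∀ t, y t ∈ 𝒜 (p' t)) (hu : ∀ t, u t ∈ 𝒜 (q t))
    (hrepa : comul a = ∑ t, x t ⊗ₜ[k] y t) (hrepb : comul b = ∑ t, u t ⊗ₜ[k] v t) :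
    conv 𝒜 hI mul comul f g (a ⊗ₜ[k] b) =
      ∑ s, ∑ t, ((-1 : k) ^ (p' s * q t)) •
        mul (f (x s ⊗ₜ[k] u t)) (g (y s ⊗ₜ[k] v t)) := by
  simp only [conv, LinearMap.comp_apply]
  rw [DC_tmul 𝒜 hI comul hy hu hrepa hrepb]
  simp only [map_sum, map_smul, TensorProduct.map_tmul, TensorProduct.lift.tmul]


lemma conv_unit_left (htot : (⨆ i, 𝒜 i) = ⊤)
    (Hcm : ∀ ⦃i : ℤ⦄ ⦃a : A⦄, a ∈ 𝒜 i → comul a ∈ tgrade 𝒜 𝒜 i)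
    (Hcz : ∀ ⦃i : ℤ⦄ ⦃a : A⦄, a ∈ 𝒜 i → i ≠ 0 → counit a = 0)
    (Hcl : ∀ a : A,
      (TensorProduct.lid k A) ((TensorProduct.map counit LinearMap.id) (comul a)) = a)
    (Hone_mul : ∀ a, mul one a = a) (f : A ⊗[k] A →ₗ[k] A) :
    conv 𝒜 hI mul comul (EE one counit) f = f := by
  refine ext_homog 𝒜 htot ?_
  intro i j a b ha hb
  obtain ⟨m, p, x, y, hx, hy, hrepa⟩ := crep 𝒜 comul Hcm ha
  obtain ⟨m', q, u, v, hu, hv, hrepb⟩ := crep 𝒜 comul Hcm hb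
  rw [conv_tmul 𝒜 hI mul comul _ f hy hu hrepa hrepb]
  have step1 : ∀ (s : Fin m) (t : Fin m'),
      ((-1 : k) ^ ((i - p s) * q t)) •
        mul (EE one counit (x s ⊗ₜ[k] u t)) (f (y s ⊗ₜ[k] v t))
      = counit (u t) • counit (x s) • f (y s ⊗ₜ[k] v t) := by
    intro s t
    rw [EE_tmul, LinearMap.map_smul₂, Hone_mul,
      mul_comm (counit (x s)) (counit (u t)), mul_smul,
      sk' 𝒜 counit Hcz (hu t) (i - p s)]
  rw [Finset.sum_congr rfl fun s _ => Finset.sum_congr rfl fun t _ => step1 s t]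
  rw [Finset.sum_comm]
  have step2 : ∀ t : Fin m', ∑ s, counit (u t) • counit (x s) • f (y s ⊗ₜ[k] v t)
      = counit (u t) • f (a ⊗ₜ[k] v t) := by
    intro t
    rw [← Finset.smul_sum]
    congr 1
    have : ∀ s : Fin m, counit (x s) • f (y s ⊗ₜ[k] v t)
        = f ((counit (x s) • y s) ⊗ₜ[k] v t) := by
      intro s; rw [← TensorProduct.smul_tmul', map_smul]
    rw [Finset.sum_congr rfl fun s _ => this s, ← map_sum, ← TensorProduct.sum_tmul,
      ccl comul counit Hcl hrepa]
  rw [Finset.sum_congr rfl fun t _ => step2 t]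
  have : ∀ t : Fin m', counit (u t) • f (a ⊗ₜ[k] v t)
      = f (a ⊗ₜ[k] (counit (u t) • v t)) := by
    intro t; rw [TensorProduct.tmul_smul, map_smul]
  rw [Finset.sum_congr rfl fun t _ => this t, ← map_sum, ← TensorProduct.tmul_sum,
    ccl comul counit Hcl hrepb]

lemma conv_unit_right (htot : (⨆ i, 𝒜 i) = ⊤)
    (Hcm : ∀ ⦃i : ℤ⦄ ⦃a : A⦄, a ∈ 𝒜 i → comul a ∈ tgrade 𝒜 𝒜 i)
    (Hcz : ∀ ⦃i : ℤ⦄ ⦃a : A⦄, a ∈ 𝒜 i → i ≠ 0 → counit a = 0)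
    (Hcr : ∀ a : A,
      (TensorProduct.rid k A) ((TensorProduct.map LinearMap.id counit) (comul a)) = a)
    (Hmul_one : ∀ a, mul a one = a) (f : A ⊗[k] A →ₗ[k] A) :
    conv 𝒜 hI mul comul f (EE one counit) = f := by
  refine ext_homog 𝒜 htot ?_
  intro i j a b ha hb
  obtain ⟨m, p, x, y, hx, hy, hrepa⟩ := crep 𝒜 comul Hcm ha
  obtain ⟨m', q, u, v, hu, hv, hrepb⟩ := crep 𝒜 comul Hcm hb
  rw [conv_tmul 𝒜 hI mul comul f _ hy hu hrepa hrepb]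
  have step1 : ∀ (s : Fin m) (t : Fin m'),
      ((-1 : k) ^ ((i - p s) * q t)) •
        mul (f (x s ⊗ₜ[k] u t)) (EE one counit (y s ⊗ₜ[k] v t))
      = counit (y s) • counit (v t) • f (x s ⊗ₜ[k] u t) := by
    intro s t
    rw [EE_tmul, map_smul, Hmul_one, mul_smul, sk 𝒜 counit Hcz (hy s) (q t)]
  rw [Finset.sum_congr rfl fun s _ => Finset.sum_congr rfl fun t _ => step1 s t]
  have step2 : ∀ s : Fin m, ∑ t, counit (y s) • counit (v t) • f (x s ⊗ₜ[k] u t)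
      = counit (y s) • f (x s ⊗ₜ[k] b) := by
    intro s
    rw [← Finset.smul_sum]
    congr 1
    have : ∀ t : Fin m', counit (v t) • f (x s ⊗ₜ[k] u t)
        = f (x s ⊗ₜ[k] (counit (v t) • u t)) := by
      intro t; rw [TensorProduct.tmul_smul, map_smul]
    rw [Finset.sum_congr rfl fun t _ => this t, ← map_sum, ← TensorProduct.tmul_sum,
      ccr comul counit Hcr hrepb]
  rw [Finset.sum_congr rfl fun s _ => step2 s]
  have : ∀ s : Fin m, counit (y s) • f (x s ⊗ₜ[k] b)
      = f ((counit (y s) • x s) ⊗ₜ[k] b) := by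
    intro s; rw [← TensorProduct.smul_tmul', map_smul]
  rw [Finset.sum_congr rfl fun s _ => this s, ← map_sum, ← TensorProduct.sum_tmul,
    ccr comul counit Hcr hrepa]


lemma conv_assoc (htot : (⨆ i, 𝒜 i) = ⊤)
    (Hcm : ∀ ⦃i : ℤ⦄ ⦃a : A⦄, a ∈ 𝒜 i → comul a ∈ tgrade 𝒜 𝒜 i)
    (Hcoassoc : ∀ a : A, (TensorProduct.assoc k A A A)
        ((TensorProduct.map comul LinearMap.id) (comul a)) =
      (TensorProduct.map LinearMap.id comul) (comul a))
    (Hmul_assoc : ∀ a b c : A, mul (mul a b) c = mul a (mul b c))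
    (f g h : A ⊗[k] A →ₗ[k] A) :
    conv 𝒜 hI mul comul (conv 𝒜 hI mul comul f g) h
      = conv 𝒜 hI mul comul f (conv 𝒜 hI mul comul g h) := by
  refine ext_homog 𝒜 htot ?_
  intro α β a b ha hb
  obtain ⟨m, p, x, y, hx, hy, hrepa⟩ := crep 𝒜 comul Hcm ha
  obtain ⟨m', q, u, v, hu, hv, hrepb⟩ := crep 𝒜 comul Hcm hb
  choose n1 r1 c1 d1 hc1 hd1 hrep1 using fun s => crep 𝒜 comul Hcm (hx s)
  choose n2 r2 c2 d2 hc2 hd2 hrep2 using fun t => crep 𝒜 comul Hcm (hu t)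
  choose n3 r3 c3 d3 hc3 hd3 hrep3 using fun s => crep 𝒜 comul Hcm (hy s)
  choose n4 r4 c4 d4 hc4 hd4 hrep4 using fun t => crep 𝒜 comul Hcm (hv t)
  set EV : (A ⊗[k] A) ⊗[k] ((A ⊗[k] A) ⊗[k] (A ⊗[k] A)) →ₗ[k] A :=
    TensorProduct.lift mul ∘ₗ
      TensorProduct.map f (TensorProduct.lift mul ∘ₗ TensorProduct.map g h) with hEVdef
  have hEV : ∀ w1 w2 w3, EV (w1 ⊗ₜ[k] (w2 ⊗ₜ[k] w3)) = mul (f w1) (mul (g w2) (h w3)) := by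
    intro w1 w2 w3; simp [hEVdef]
  -- coassociativity at the level of representatives
  have hX1 : (∑ s, ∑ w, (c1 s w) ⊗ₜ[k] ((d1 s w) ⊗ₜ[k] (y s)))
      = ∑ s, ∑ w, (x s) ⊗ₜ[k] ((c3 s w) ⊗ₜ[k] (d3 s w)) := by
    have e1 : (TensorProduct.assoc k A A A)
        ((TensorProduct.map comul LinearMap.id) (comul a))
        = ∑ s, ∑ w, (c1 s w) ⊗ₜ[k] ((d1 s w) ⊗ₜ[k] (y s)) := by
      rw [hrepa, map_sum, map_sum]
      refine Finset.sum_congr rfl fun s _ => ?_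
      rw [TensorProduct.map_tmul, LinearMap.id_coe, id_eq, hrep1 s,
        TensorProduct.sum_tmul, map_sum]
      exact Finset.sum_congr rfl fun w _ => TensorProduct.assoc_tmul _ _ _
    have e2 : (TensorProduct.map LinearMap.id comul) (comul a)
        = ∑ s, ∑ w, (x s) ⊗ₜ[k] ((c3 s w) ⊗ₜ[k] (d3 s w)) := by
      rw [hrepa, map_sum]
      refine Finset.sum_congr rfl fun s _ => ?_
      rw [TensorProduct.map_tmul, LinearMap.id_coe, id_eq, hrep3 s, TensorProduct.tmul_sum]
    rw [← e1, ← e2, Hcoassoc a]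
  have hX2 : (∑ t, ∑ z, (c2 t z) ⊗ₜ[k] ((d2 t z) ⊗ₜ[k] (v t)))
      = ∑ t, ∑ z, (u t) ⊗ₜ[k] ((c4 t z) ⊗ₜ[k] (d4 t z)) := by
    have e1 : (TensorProduct.assoc k A A A)
        ((TensorProduct.map comul LinearMap.id) (comul b))
        = ∑ t, ∑ z, (c2 t z) ⊗ₜ[k] ((d2 t z) ⊗ₜ[k] (v t)) := by
      rw [hrepb, map_sum, map_sum]
      refine Finset.sum_congr rfl fun t _ => ?_
      rw [TensorProduct.map_tmul, LinearMap.id_coe, id_eq, hrep2 t,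
        TensorProduct.sum_tmul, map_sum]
      exact Finset.sum_congr rfl fun z _ => TensorProduct.assoc_tmul _ _ _
    have e2 : (TensorProduct.map LinearMap.id comul) (comul b)
        = ∑ t, ∑ z, (u t) ⊗ₜ[k] ((c4 t z) ⊗ₜ[k] (d4 t z)) := by
      rw [hrepb, map_sum]
      refine Finset.sum_congr rfl fun t _ => ?_
      rw [TensorProduct.map_tmul, LinearMap.id_coe, id_eq, hrep4 t, TensorProduct.tmul_sum]
    rw [← e1, ← e2, Hcoassoc b]
  have keyL : conv 𝒜 hI mul comul (conv 𝒜 hI mul comul f g) h (a ⊗ₜ[k] b)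
      = EV (q6 𝒜 hI ((∑ s, ∑ w, (c1 s w) ⊗ₜ[k] ((d1 s w) ⊗ₜ[k] (y s))) ⊗ₜ[k]
          (∑ t, ∑ z, (c2 t z) ⊗ₜ[k] ((d2 t z) ⊗ₜ[k] (v t))))) := by
    rw [conv_tmul 𝒜 hI mul comul _ h hy hu hrepa hrepb]
    have inner : ∀ s t, conv 𝒜 hI mul comul f g (x s ⊗ₜ[k] u t)
        = ∑ w, ∑ z, ((-1 : k) ^ ((p s - r1 s w) * (r2 t z))) •
            mul (f (c1 s w ⊗ₜ[k] c2 t z)) (g (d1 s w ⊗ₜ[k] d2 t z)) := fun s t =>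
      conv_tmul 𝒜 hI mul comul f g (hd1 s) (hc2 t) (hrep1 s) (hrep2 t)
    have rhs : q6 𝒜 hI ((∑ s, ∑ w, (c1 s w) ⊗ₜ[k] ((d1 s w) ⊗ₜ[k] (y s))) ⊗ₜ[k]
          (∑ t, ∑ z, (c2 t z) ⊗ₜ[k] ((d2 t z) ⊗ₜ[k] (v t))))
        = ∑ s, ∑ w, ∑ t, ∑ z,
            ((-1 : k) ^ ((α - p s) * (r2 t z) + (p s - r1 s w) * (r2 t z) +
              (α - p s) * (q t - r2 t z))) •
            ((c1 s w ⊗ₜ[k] c2 t z) ⊗ₜ[k] ((d1 s w ⊗ₜ[k] d2 t z) ⊗ₜ[k] (y s ⊗ₜ[k] v t))) := by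
      rw [TensorProduct.sum_tmul, map_sum]
      refine Finset.sum_congr rfl fun s _ => ?_
      rw [TensorProduct.sum_tmul, map_sum]
      refine Finset.sum_congr rfl fun w _ => ?_
      rw [TensorProduct.tmul_sum, map_sum]
      refine Finset.sum_congr rfl fun t _ => ?_
      rw [TensorProduct.tmul_sum, map_sum]
      refine Finset.sum_congr rfl fun z _ => ?_
      exact q6_tmul 𝒜 hI (hd1 s w) (hy s) (hc2 t z) (hd2 t z)
    have rhs2 := rhs.trans (Finset.sum_congr rfl fun s _ => Finset.sum_comm)
    rw [rhs2]
    simp only [map_sum, map_smul, hEV]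
    refine Finset.sum_congr rfl fun s _ => Finset.sum_congr rfl fun t _ => ?_
    rw [inner s t]
    simp only [map_sum, LinearMap.sum_apply, map_smul, LinearMap.smul_apply,
      Finset.smul_sum, smul_smul]
    refine Finset.sum_congr rfl fun w _ => Finset.sum_congr rfl fun z _ => ?_
    rw [Hmul_assoc]
    congr 1
    rw [zpow_neg_one_mul]
    congr 1
    ring
  have keyR : conv 𝒜 hI mul comul f (conv 𝒜 hI mul comul g h) (a ⊗ₜ[k] b)
      = EV (q6 𝒜 hI ((∑ s, ∑ w, (x s) ⊗ₜ[k] ((c3 s w) ⊗ₜ[k] (d3 s w))) ⊗ₜ[k]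
          (∑ t, ∑ z, (u t) ⊗ₜ[k] ((c4 t z) ⊗ₜ[k] (d4 t z))))) := by
    rw [conv_tmul 𝒜 hI mul comul f _ hy hu hrepa hrepb]
    have inner : ∀ s t, conv 𝒜 hI mul comul g h (y s ⊗ₜ[k] v t)
        = ∑ w, ∑ z, ((-1 : k) ^ ((α - p s - r3 s w) * (r4 t z))) •
            mul (g (c3 s w ⊗ₜ[k] c4 t z)) (h (d3 s w ⊗ₜ[k] d4 t z)) := fun s t =>
      conv_tmul 𝒜 hI mul comul g h (hd3 s) (hc4 t) (hrep3 s) (hrep4 t)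
    have rhs : q6 𝒜 hI ((∑ s, ∑ w, (x s) ⊗ₜ[k] ((c3 s w) ⊗ₜ[k] (d3 s w))) ⊗ₜ[k]
          (∑ t, ∑ z, (u t) ⊗ₜ[k] ((c4 t z) ⊗ₜ[k] (d4 t z))))
        = ∑ s, ∑ w, ∑ t, ∑ z,
            ((-1 : k) ^ ((α - p s - r3 s w) * (q t) + (r3 s w) * (q t) +
              (α - p s - r3 s w) * (r4 t z))) •
            ((x s ⊗ₜ[k] u t) ⊗ₜ[k] ((c3 s w ⊗ₜ[k] c4 t z) ⊗ₜ[k] (d3 s w ⊗ₜ[k] d4 t z))) := by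
      rw [TensorProduct.sum_tmul, map_sum]
      refine Finset.sum_congr rfl fun s _ => ?_
      rw [TensorProduct.sum_tmul, map_sum]
      refine Finset.sum_congr rfl fun w _ => ?_
      rw [TensorProduct.tmul_sum, map_sum]
      refine Finset.sum_congr rfl fun t _ => ?_
      rw [TensorProduct.tmul_sum, map_sum]
      refine Finset.sum_congr rfl fun z _ => ?_
      exact q6_tmul 𝒜 hI (hc3 s w) (hd3 s w) (hu t) (hc4 t z)
    have rhs2 := rhs.trans (Finset.sum_congr rfl fun s _ => Finset.sum_comm)
    rw [rhs2]
    simp only [map_sum, map_smul, hEV]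
    refine Finset.sum_congr rfl fun s _ => Finset.sum_congr rfl fun t _ => ?_
    rw [inner s t]
    simp only [map_sum, LinearMap.sum_apply, map_smul, LinearMap.smul_apply,
      Finset.smul_sum, smul_smul]
    refine Finset.sum_congr rfl fun w _ => Finset.sum_congr rfl fun z _ => ?_
    congr 1
    rw [zpow_neg_one_mul]
    congr 1
    ring
  rw [keyL, keyR, hX1, hX2]


def KoszulMulChar' (mulM : A →ₗ[k] A →ₗ[k] A)
    (μ : (A ⊗[k] A) →ₗ[k] (A ⊗[k] A) →ₗ[k] (A ⊗[k] A)) : Prop :=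
  ∀ ⦃i j : ℤ⦄ (a : A) ⦃a' : A⦄ ⦃b : A⦄ (b' : A), a' ∈ 𝒜 i → b ∈ 𝒜 j →
    μ (a ⊗ₜ[k] b) (a' ⊗ₜ[k] b') = ((-1 : k) ^ (i * j)) • ((mulM a a') ⊗ₜ[k] (mulM b b'))

def KoszulBracketChar' (mulM : A →ₗ[k] A →ₗ[k] A) (brM : A →ₗ[k] A →ₗ[k] A)
    (β : (A ⊗[k] A) →ₗ[k] (A ⊗[k] A) →ₗ[k] (A ⊗[k] A)) : Prop :=
  ∀ ⦃i j : ℤ⦄ (a : A) ⦃a' : A⦄ ⦃b : A⦄ (b' : A), a' ∈ 𝒜 i → b ∈ 𝒜 j →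
    β (a ⊗ₜ[k] b) (a' ⊗ₜ[k] b') =
      ((-1 : k) ^ ((i + 0) * j)) • ((brM a a') ⊗ₜ[k] (mulM b b')) +
      ((-1 : k) ^ ((j + 0) * i)) • ((mulM a a') ⊗ₜ[k] (brM b b'))

lemma comul_mul_tmul
    (Hcm2 : ∃ mul₂ : (A ⊗[k] A) →ₗ[k] (A ⊗[k] A) →ₗ[k] (A ⊗[k] A),
      KoszulMulChar' 𝒜 mul mul₂ ∧ ∀ a b : A, comul (mul a b) = mul₂ (comul a) (comul b))
    {a b : A} {m m' : ℕ} {p' : Fin m → ℤ} {x y : Fin m → A}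
    {q : Fin m' → ℤ} {u v : Fin m' → A}
    (hy : ∀ t, y t ∈ 𝒜 (p' t)) (hu : ∀ t, u t ∈ 𝒜 (q t))
    (hrepa : comul a = ∑ t, x t ⊗ₜ[k] y t) (hrepb : comul b = ∑ t, u t ⊗ₜ[k] v t) :
    comul (mul a b) = ∑ s, ∑ t, ((-1 : k) ^ (q t * p' s)) •
      ((mul (x s) (u t)) ⊗ₜ[k] (mul (y s) (v t))) := by
  obtain ⟨mul₂, hchar, hcm⟩ := Hcm2
  rw [hcm, hrepa, hrepb]
  simp only [map_sum, LinearMap.sum_apply]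
  rw [Finset.sum_comm]
  exact Finset.sum_congr rfl fun s _ => Finset.sum_congr rfl fun t _ =>
    hchar (x s) (v t) (hu t) (hy s)

lemma comul_bracket_tmul
    (Hcb2 : ∃ br₂ : (A ⊗[k] A) →ₗ[k] (A ⊗[k] A) →ₗ[k] (A ⊗[k] A),
      KoszulBracketChar' 𝒜 mul bracket br₂ ∧
        ∀ a b : A, comul (bracket a b) = br₂ (comul a) (comul b))
    {a b : A} {m m' : ℕ} {p' : Fin m → ℤ} {x y : Fin m → A}
    {q : Fin m' → ℤ} {u v : Fin m' → A}
    (hy : ∀ t, y t ∈ 𝒜 (p' t)) (hu : ∀ t, u t ∈ 𝒜 (q t))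
    (hrepa : comul a = ∑ t, x t ⊗ₜ[k] y t) (hrepb : comul b = ∑ t, u t ⊗ₜ[k] v t) :
    comul (bracket a b) = ∑ s, ∑ t,
      (((-1 : k) ^ (q t * p' s)) • ((bracket (x s) (u t)) ⊗ₜ[k] (mul (y s) (v t))) +
       ((-1 : k) ^ (p' s * q t)) • ((mul (x s) (u t)) ⊗ₜ[k] (bracket (y s) (v t)))) := by
  obtain ⟨br₂, hchar, hcb⟩ := Hcb2
  rw [hcb, hrepa, hrepb]
  simp only [map_sum, LinearMap.sum_apply]
  rw [Finset.sum_comm]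
  refine Finset.sum_congr rfl fun s _ => Finset.sum_congr rfl fun t _ => ?_
  have := hchar (x s) (v t) (hu t) (hy s)
  simpa using this

lemma skk
    (Hcz : ∀ ⦃i : ℤ⦄ ⦃a : A⦄, a ∈ 𝒜 i → i ≠ 0 → counit a = 0)
    {q : ℤ} {u : A} (hu : u ∈ 𝒜 q) (r : ℤ) (c : k) :
    ((-1 : k) ^ (r * q)) * counit u * c = counit u * c := by
  by_cases hq : q = 0
  · simp [hq]
  · rw [Hcz hu hq]; ring

lemma counit_bracket
    (Hcz : ∀ ⦃i : ℤ⦄ ⦃a : A⦄, a ∈ 𝒜 i → i ≠ 0 → counit a = 0)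
    (Hcl : ∀ a : A,
      (TensorProduct.lid k A) ((TensorProduct.map counit LinearMap.id) (comul a)) = a)
    (Hcr : ∀ a : A,
      (TensorProduct.rid k A) ((TensorProduct.map LinearMap.id counit) (comul a)) = a)
    (Hcm : ∀ ⦃i : ℤ⦄ ⦃a : A⦄, a ∈ 𝒜 i → comul a ∈ tgrade 𝒜 𝒜 i)
    (Hcmu : ∀ a b : A, counit (mul a b) = counit a * counit b)
    (Hcb2 : ∃ br₂ : (A ⊗[k] A) →ₗ[k] (A ⊗[k] A) →ₗ[k] (A ⊗[k] A),
      KoszulBracketChar' 𝒜 mul bracket br₂ ∧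
        ∀ a b : A, comul (bracket a b) = br₂ (comul a) (comul b))
    {i j : ℤ} {a b : A} (ha : a ∈ 𝒜 i) (hb : b ∈ 𝒜 j) :
    counit (bracket a b) = 0 := by
  obtain ⟨m, p, x, y, hx, hy, hrepa⟩ := crep 𝒜 comul Hcm ha
  obtain ⟨m', q, u, v, hu, hv, hrepb⟩ := crep 𝒜 comul Hcm hb
  have h0 : bracket a b = (TensorProduct.lid k A)
      ((TensorProduct.map counit LinearMap.id) (comul (bracket a b))) := (Hcl _).symm
  rw [comul_bracket_tmul 𝒜 mul bracket comul Hcb2 hy hu hrepa hrepb] at h0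
  simp only [map_sum, map_add, map_smul, TensorProduct.map_tmul, LinearMap.id_coe, id_eq,
    TensorProduct.lid_tmul] at h0
  have h1 := congrArg counit h0
  simp only [map_sum, map_add, map_smul, smul_eq_mul, Hcmu] at h1
  have e1 : ∀ (s : Fin m) (t : Fin m'),
      ((-1 : k) ^ (q t * (i - p s))) * (counit (bracket (x s) (u t)) *
        (counit (y s) * counit (v t)))
      = counit (y s) * (counit (v t) * counit (bracket (x s) (u t))) := by
    intro s t
    calc ((-1 : k) ^ (q t * (i - p s))) * (counit (bracket (x s) (u t)) *
        (counit (y s) * counit (v t)))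
        = ((-1 : k) ^ (q t * (i - p s))) * counit (y s) *
            (counit (v t) * counit (bracket (x s) (u t))) := by ring
      _ = counit (y s) * (counit (v t) * counit (bracket (x s) (u t))) :=
          skk 𝒜 counit Hcz (hy s) (q t) _
  have e2 : ∀ (s : Fin m) (t : Fin m'),
      ((-1 : k) ^ ((i - p s) * q t)) * (counit (x s) * counit (u t) *
        counit (bracket (y s) (v t)))
      = counit (x s) * (counit (u t) * counit (bracket (y s) (v t))) := by
    intro s t
    calc ((-1 : k) ^ ((i - p s) * q t)) * (counit (x s) * counit (u t) *
        counit (bracket (y s) (v t)))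
        = ((-1 : k) ^ ((i - p s) * q t)) * counit (u t) *
            (counit (x s) * counit (bracket (y s) (v t))) := by ring
      _ = counit (u t) * (counit (x s) * counit (bracket (y s) (v t))) :=
          skk 𝒜 counit Hcz (hu t) (i - p s) _
      _ = counit (x s) * (counit (u t) * counit (bracket (y s) (v t))) := by ring
  simp only [e1, e2] at h1
  have cA : ∑ s, ∑ t, counit (y s) * (counit (v t) * counit (bracket (x s) (u t)))
      = counit (bracket a b) := by
    conv_rhs => rw [← ccr comul counit Hcr hrepa, ← ccr comul counit Hcr hrepb]
    simp only [map_sum, LinearMap.sum_apply, map_smul, LinearMap.smul_apply, smul_eq_mul]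
    rw [Finset.sum_comm]
    refine Finset.sum_congr rfl fun t _ => ?_
    rw [Finset.mul_sum]
    exact Finset.sum_congr rfl fun s _ => by ring
  have cB : ∑ s, ∑ t, counit (x s) * (counit (u t) * counit (bracket (y s) (v t)))
      = counit (bracket a b) := by
    conv_rhs => rw [← ccl comul counit Hcl hrepa, ← ccl comul counit Hcl hrepb]
    simp only [map_sum, LinearMap.sum_apply, map_smul, LinearMap.smul_apply, smul_eq_mul]
    rw [Finset.sum_comm]
    refine Finset.sum_congr rfl fun t _ => ?_
    rw [Finset.mul_sum]
    exact Finset.sum_congr rfl fun s _ => by ring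
  rw [Finset.sum_congr rfl fun s (_ : s ∈ (Finset.univ : Finset (Fin m))) =>
    Finset.sum_add_distrib] at h1
  rw [Finset.sum_add_distrib, cA, cB] at h1
  exact (left_eq_add.mp h1)


lemma br_one_right (Hleib' : ∀ ⦃i j : ℤ⦄ ⦃a b : A⦄ (c : A), a ∈ 𝒜 i → b ∈ 𝒜 j →
      bracket a (mul b c) = mul (bracket a b) c + ((-1 : k) ^ (i * j)) • mul b (bracket a c))
    (htot : (⨆ i, 𝒜 i) = ⊤) (Hone_mem : one ∈ 𝒜 0)
    (Hmul_one : ∀ a, mul a one = a) (Hone_mul : ∀ a, mul one a = a) :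
    ∀ c, bracket c one = 0 := by
  have h : ∀ ⦃i : ℤ⦄ ⦃c : A⦄, c ∈ 𝒜 i → bracket c one = 0 := by
    intro i c hc
    have h2 := Hleib' one hc Hone_mem
    rw [Hmul_one one, Hmul_one (bracket c one), mul_zero, zpow_zero, one_smul,
      Hone_mul (bracket c one)] at h2
    exact left_eq_add.mp h2
  have hmap : bracket.flip one = 0 :=
    map_ext_homog 𝒜 htot (fun i c hc => by simpa using h hc)
  intro c
  simpa using LinearMap.congr_fun hmap c

lemma br_one_left (Hanti' : ∀ ⦃i j : ℤ⦄ ⦃a b : A⦄, a ∈ 𝒜 i → b ∈ 𝒜 j →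
      bracket a b = -(((-1 : k) ^ (i * j)) • bracket b a))
    (Hleib' : ∀ ⦃i j : ℤ⦄ ⦃a b : A⦄ (c : A), a ∈ 𝒜 i → b ∈ 𝒜 j →
      bracket a (mul b c) = mul (bracket a b) c + ((-1 : k) ^ (i * j)) • mul b (bracket a c))
    (htot : (⨆ i, 𝒜 i) = ⊤) (Hone_mem : one ∈ 𝒜 0)
    (Hmul_one : ∀ a, mul a one = a) (Hone_mul : ∀ a, mul one a = a) :
    ∀ c, bracket one c = 0 := by
  have h : ∀ ⦃j : ℤ⦄ ⦃c : A⦄, c ∈ 𝒜 j → bracket one c = 0 := by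
    intro j c hc
    rw [Hanti' Hone_mem hc,
      br_one_right 𝒜 mul one bracket Hleib' htot Hone_mem Hmul_one Hone_mul c]
    simp
  have hmap : bracket one = 0 := map_ext_homog 𝒜 htot (fun j c hc => by simpa using h hc)
  intro c
  simpa using LinearMap.congr_fun hmap c

lemma leib1 (Hanti' : ∀ ⦃i j : ℤ⦄ ⦃a b : A⦄, a ∈ 𝒜 i → b ∈ 𝒜 j →
      bracket a b = -(((-1 : k) ^ (i * j)) • bracket b a))
    (Hleib' : ∀ ⦃i j : ℤ⦄ ⦃a b : A⦄ (c : A), a ∈ 𝒜 i → b ∈ 𝒜 j →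
      bracket a (mul b c) = mul (bracket a b) c + ((-1 : k) ^ (i * j)) • mul b (bracket a c))
    (Hmul_mem : ∀ ⦃i j : ℤ⦄ ⦃a b : A⦄, a ∈ 𝒜 i → b ∈ 𝒜 j → mul a b ∈ 𝒜 (i + j))
    {φ γ γ' : ℤ} {f g c : A} (hf : f ∈ 𝒜 φ) (hg : g ∈ 𝒜 γ) (hc : c ∈ 𝒜 γ') :
    bracket (mul f g) c
      = ((-1 : k) ^ (γ * γ')) • mul (bracket f c) g + mul f (bracket g c) := by
  have hfc := Hanti' hc hf
  have hgc := Hanti' hc hg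
  calc bracket (mul f g) c
      = -(((-1 : k) ^ ((φ + γ) * γ')) • bracket c (mul f g)) :=
        Hanti' (Hmul_mem hf hg) hc
    _ = -(((-1 : k) ^ ((φ + γ) * γ')) •
          (mul (bracket c f) g + ((-1 : k) ^ (γ' * φ)) • mul f (bracket c g))) := by
        rw [Hleib' g hc hf]
    _ = ((-1 : k) ^ ((φ + γ) * γ' + γ' * φ)) • mul (bracket f c) g +
          ((-1 : k) ^ ((φ + γ) * γ' + (γ' * φ + γ' * γ))) • mul f (bracket g c) := by
        rw [hfc, hgc]
        simp only [map_neg, LinearMap.neg_apply, map_smul, LinearMap.smul_apply,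
          smul_add, smul_neg, smul_smul, neg_add_rev, neg_neg, zpow_neg_one_mul]
        rw [add_comm]
    _ = ((-1 : k) ^ (γ * γ')) • mul (bracket f c) g + mul f (bracket g c) := by
        rw [show (φ + γ) * γ' + γ' * φ = γ * γ' + 2 * (φ * γ') by ring, zpow_reduce,
          show (φ + γ) * γ' + (γ' * φ + γ' * γ) = 0 + 2 * (φ * γ' + γ' * γ) by ring,
          zpow_reduce, zpow_zero, one_smul]


lemma D1 (Hanti' : ∀ ⦃i j : ℤ⦄ ⦃a b : A⦄, a ∈ 𝒜 i → b ∈ 𝒜 j →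
      bracket a b = -(((-1 : k) ^ (i * j)) • bracket b a))
    (Hleib' : ∀ ⦃i j : ℤ⦄ ⦃a b : A⦄ (c : A), a ∈ 𝒜 i → b ∈ 𝒜 j →
      bracket a (mul b c) = mul (bracket a b) c + ((-1 : k) ^ (i * j)) • mul b (bracket a c))
    (Hmul_mem : ∀ ⦃i j : ℤ⦄ ⦃a b : A⦄, a ∈ 𝒜 i → b ∈ 𝒜 j → mul a b ∈ 𝒜 (i + j))
    (HS_mem : ∀ ⦃i : ℤ⦄ ⦃a : A⦄, a ∈ 𝒜 i → S a ∈ 𝒜 i)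
    (HSr : ∀ a : A,
      TensorProduct.lift mul ((TensorProduct.map LinearMap.id S) (comul a)) = counit a • one)
    (hbr1L : ∀ c, bracket one c = 0)
    {ζ γ : ℤ} {z c : A} (hz : z ∈ 𝒜 ζ) (hcm : c ∈ 𝒜 γ)
    {n : ℕ} {π : Fin n → ℤ} {z1 z2 : Fin n → A}
    (h1 : ∀ w, z1 w ∈ 𝒜 (π w)) (h2 : ∀ w, z2 w ∈ 𝒜 (ζ - π w))
    (hrep : comul z = ∑ w, z1 w ⊗ₜ[k] z2 w) :
    ∑ w, ((-1 : k) ^ ((ζ - π w) * γ)) • mul (bracket (z1 w) c) (S (z2 w))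
      = -∑ w, mul (z1 w) (bracket (S (z2 w)) c) := by
  have h0 : bracket (∑ w, mul (z1 w) (S (z2 w))) c = 0 := by
    rw [scr mul one comul counit S HSr hrep, LinearMap.map_smul₂, hbr1L c, smul_zero]
  rw [show bracket (∑ w, mul (z1 w) (S (z2 w))) c
      = ∑ w, bracket (mul (z1 w) (S (z2 w))) c by
    rw [map_sum, LinearMap.sum_apply]] at h0
  rw [Finset.sum_congr rfl (fun w _ =>
    leib1 𝒜 mul bracket Hanti' Hleib' Hmul_mem (h1 w) (HS_mem (h2 w)) hcm)] at h0
  rw [Finset.sum_add_distrib] at h0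
  exact eq_neg_of_add_eq_zero_left h0

lemma D2 (Hleib' : ∀ ⦃i j : ℤ⦄ ⦃a b : A⦄ (c : A), a ∈ 𝒜 i → b ∈ 𝒜 j →
      bracket a (mul b c) = mul (bracket a b) c + ((-1 : k) ^ (i * j)) • mul b (bracket a c))
    (HS_mem : ∀ ⦃i : ℤ⦄ ⦃a : A⦄, a ∈ 𝒜 i → S a ∈ 𝒜 i)
    (HSr : ∀ a : A,
      TensorProduct.lift mul ((TensorProduct.map LinearMap.id S) (comul a)) = counit a • one)
    (hbr1R : ∀ c, bracket c one = 0)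
    {ζ γ : ℤ} {z c : A} (hz : z ∈ 𝒜 ζ) (hcm : c ∈ 𝒜 γ)
    {n : ℕ} {π : Fin n → ℤ} {z1 z2 : Fin n → A}
    (h1 : ∀ w, z1 w ∈ 𝒜 (π w)) (h2 : ∀ w, z2 w ∈ 𝒜 (ζ - π w))
    (hrep : comul z = ∑ w, z1 w ⊗ₜ[k] z2 w) :
    ∑ w, mul (bracket c (z1 w)) (S (z2 w))
      = -∑ w, ((-1 : k) ^ (γ * π w)) • mul (z1 w) (bracket c (S (z2 w))) := by
  have h0 : bracket c (∑ w, mul (z1 w) (S (z2 w))) = 0 := by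
    rw [scr mul one comul counit S HSr hrep, map_smul, hbr1R c, smul_zero]
  rw [map_sum] at h0
  rw [Finset.sum_congr rfl (fun w _ => Hleib' (S (z2 w)) hcm (h1 w))] at h0
  rw [Finset.sum_add_distrib] at h0
  exact eq_neg_of_add_eq_zero_left h0

lemma conv_m_Sm (htot : (⨆ i, 𝒜 i) = ⊤)
    (Hcm : ∀ ⦃i : ℤ⦄ ⦃a : A⦄, a ∈ 𝒜 i → comul a ∈ tgrade 𝒜 𝒜 i)
    (Hcmu : ∀ a b : A, counit (mul a b) = counit a * counit b)
    (Hcm2 : ∃ mul₂ : (A ⊗[k] A) →ₗ[k] (A ⊗[k] A) →ₗ[k] (A ⊗[k] A),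
      KoszulMulChar' 𝒜 mul mul₂ ∧ ∀ a b : A, comul (mul a b) = mul₂ (comul a) (comul b))
    (HSr : ∀ a : A,
      TensorProduct.lift mul ((TensorProduct.map LinearMap.id S) (comul a)) = counit a • one) :
    conv 𝒜 hI mul comul (TensorProduct.lift mul) (S ∘ₗ TensorProduct.lift mul)
      = EE one counit := by
  refine ext_homog 𝒜 htot ?_
  intro i j a b ha hb
  obtain ⟨m, p, x, y, hx, hy, hrepa⟩ := crep 𝒜 comul Hcm ha
  obtain ⟨m', q, u, v, hu, hv, hrepb⟩ := crep 𝒜 comul Hcm hb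
  rw [conv_tmul 𝒜 hI mul comul _ _ hy hu hrepa hrepb, EE_tmul, ← Hcmu a b]
  have h0 := HSr (mul a b)
  rw [comul_mul_tmul 𝒜 mul comul Hcm2 hy hu hrepa hrepb] at h0
  simp only [map_sum, map_smul, TensorProduct.map_tmul, LinearMap.id_coe, id_eq,
    TensorProduct.lift.tmul] at h0
  rw [← h0]
  simp only [LinearMap.comp_apply, TensorProduct.lift.tmul]
  exact Finset.sum_congr rfl fun s _ => Finset.sum_congr rfl fun t _ => by
    rw [mul_comm (q t) (i - p s)]

lemma conv_Sm_m (htot : (⨆ i, 𝒜 i) = ⊤)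
    (Hcm : ∀ ⦃i : ℤ⦄ ⦃a : A⦄, a ∈ 𝒜 i → comul a ∈ tgrade 𝒜 𝒜 i)
    (Hcmu : ∀ a b : A, counit (mul a b) = counit a * counit b)
    (Hcm2 : ∃ mul₂ : (A ⊗[k] A) →ₗ[k] (A ⊗[k] A) →ₗ[k] (A ⊗[k] A),
      KoszulMulChar' 𝒜 mul mul₂ ∧ ∀ a b : A, comul (mul a b) = mul₂ (comul a) (comul b))
    (HSl : ∀ a : A,
      TensorProduct.lift mul ((TensorProduct.map S LinearMap.id) (comul a)) = counit a • one) :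
    conv 𝒜 hI mul comul (S ∘ₗ TensorProduct.lift mul) (TensorProduct.lift mul)
      = EE one counit := by
  refine ext_homog 𝒜 htot ?_
  intro i j a b ha hb
  obtain ⟨m, p, x, y, hx, hy, hrepa⟩ := crep 𝒜 comul Hcm ha
  obtain ⟨m', q, u, v, hu, hv, hrepb⟩ := crep 𝒜 comul Hcm hb
  rw [conv_tmul 𝒜 hI mul comul _ _ hy hu hrepa hrepb, EE_tmul, ← Hcmu a b]
  have h0 := HSl (mul a b)
  rw [comul_mul_tmul 𝒜 mul comul Hcm2 hy hu hrepa hrepb] at h0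
  simp only [map_sum, map_smul, TensorProduct.map_tmul, LinearMap.id_coe, id_eq,
    TensorProduct.lift.tmul] at h0
  rw [← h0]
  simp only [LinearMap.comp_apply, TensorProduct.lift.tmul]
  exact Finset.sum_congr rfl fun s _ => Finset.sum_congr rfl fun t _ => by
    rw [mul_comm (q t) (i - p s)]

lemma conv_h_m (htot : (⨆ i, 𝒜 i) = ⊤)
    (Hcm : ∀ ⦃i : ℤ⦄ ⦃a : A⦄, a ∈ 𝒜 i → comul a ∈ tgrade 𝒜 𝒜 i)
    (Hmul_assoc : ∀ a b c : A, mul (mul a b) c = mul a (mul b c))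
    (Hone_mul : ∀ a, mul one a = a)
    (Hgcomm : ∀ ⦃i j : ℤ⦄ ⦃a b : A⦄, a ∈ 𝒜 i → b ∈ 𝒜 j →
      mul a b = ((-1 : k) ^ (i * j)) • mul b a)
    (HS_mem : ∀ ⦃i : ℤ⦄ ⦃a : A⦄, a ∈ 𝒜 i → S a ∈ 𝒜 i)
    (HSl : ∀ a : A,
      TensorProduct.lift mul ((TensorProduct.map S LinearMap.id) (comul a)) = counit a • one) :
    conv 𝒜 hI mul comul (TensorProduct.lift mul ∘ₗ TensorProduct.map S S)
      (TensorProduct.lift mul) = EE one counit := by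
  refine ext_homog 𝒜 htot ?_
  intro i j a b ha hb
  obtain ⟨m, p, x, y, hx, hy, hrepa⟩ := crep 𝒜 comul Hcm ha
  obtain ⟨m', q, u, v, hu, hv, hrepb⟩ := crep 𝒜 comul Hcm hb
  rw [conv_tmul 𝒜 hI mul comul _ _ hy hu hrepa hrepb, EE_tmul]
  simp only [LinearMap.comp_apply, TensorProduct.map_tmul, TensorProduct.lift.tmul]
  have e : ∀ (s : Fin m) (t : Fin m'),
      ((-1 : k) ^ ((i - p s) * q t)) •
        mul (mul (S (x s)) (S (u t))) (mul (y s) (v t))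
      = mul (mul (S (x s)) (y s)) (mul (S (u t)) (v t)) := by
    intro s t
    rw [Hmul_assoc (S (x s)) (S (u t)) (mul (y s) (v t)),
      ← Hmul_assoc (S (u t)) (y s) (v t),
      Hgcomm (HS_mem (hu t)) (hy s)]
    simp only [LinearMap.map_smul₂, map_smul, LinearMap.smul_apply, smul_smul]
    rw [zpow_neg_one_mul,
      show (i - p s) * q t + q t * (i - p s) = 0 + 2 * ((i - p s) * q t) by ring,
      zpow_reduce, zpow_zero, one_smul,
      Hmul_assoc (y s) (S (u t)) (v t), ← Hmul_assoc (S (x s)) (y s) (mul (S (u t)) (v t))]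
  rw [Finset.sum_congr rfl fun s _ => Finset.sum_congr rfl fun t _ => e s t]
  have hcol : (counit a * counit b) • one
      = mul (∑ s, mul (S (x s)) (y s)) (∑ t, mul (S (u t)) (v t)) := by
    rw [scl mul one comul counit S HSl hrepa, scl mul one comul counit S HSl hrepb,
      LinearMap.map_smul₂, map_smul, Hone_mul one, mul_smul]
  rw [hcol]
  simp only [map_sum, LinearMap.sum_apply]
  exact Finset.sum_comm


lemma conv_neg_right (f g : A ⊗[k] A →ₗ[k] A) :
    conv 𝒜 hI mul comul f (-g) = -(conv 𝒜 hI mul comul f g) := by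
  have hmap : TensorProduct.map f (-g) = -(TensorProduct.map f g) := by
    apply TensorProduct.ext'
    intro a b
    simp [TensorProduct.map_tmul, TensorProduct.tmul_neg]
  unfold conv
  rw [hmap]
  simp [LinearMap.neg_comp, LinearMap.comp_neg]

lemma rel1 (htot : (⨆ i, 𝒜 i) = ⊤)
    (Hcm : ∀ ⦃i : ℤ⦄ ⦃a : A⦄, a ∈ 𝒜 i → comul a ∈ tgrade 𝒜 𝒜 i)
    (Hcz : ∀ ⦃i : ℤ⦄ ⦃a : A⦄, a ∈ 𝒜 i → i ≠ 0 → counit a = 0)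
    (Hcl : ∀ a : A,
      (TensorProduct.lid k A) ((TensorProduct.map counit LinearMap.id) (comul a)) = a)
    (Hcr : ∀ a : A,
      (TensorProduct.rid k A) ((TensorProduct.map LinearMap.id counit) (comul a)) = a)
    (Hcmu : ∀ a b : A, counit (mul a b) = counit a * counit b)
    (Hcb2 : ∃ br₂ : (A ⊗[k] A) →ₗ[k] (A ⊗[k] A) →ₗ[k] (A ⊗[k] A),
      KoszulBracketChar' 𝒜 mul bracket br₂ ∧
        ∀ a b : A, comul (bracket a b) = br₂ (comul a) (comul b))
    (HSr : ∀ a : A,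
      TensorProduct.lift mul ((TensorProduct.map LinearMap.id S) (comul a)) = counit a • one) :
    conv 𝒜 hI mul comul (TensorProduct.lift mul) (S ∘ₗ TensorProduct.lift bracket)
      = -(conv 𝒜 hI mul comul (TensorProduct.lift bracket) (S ∘ₗ TensorProduct.lift mul)) := by
  refine ext_homog 𝒜 htot ?_
  intro i j a b ha hb
  obtain ⟨m, p, x, y, hx, hy, hrepa⟩ := crep 𝒜 comul Hcm ha
  obtain ⟨m', q, u, v, hu, hv, hrepb⟩ := crep 𝒜 comul Hcm hb
  rw [LinearMap.neg_apply, conv_tmul 𝒜 hI mul comul _ _ hy hu hrepa hrepb,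
    conv_tmul 𝒜 hI mul comul _ _ hy hu hrepa hrepb]
  simp only [LinearMap.comp_apply, TensorProduct.lift.tmul]
  have h0 := HSr (bracket a b)
  rw [comul_bracket_tmul 𝒜 mul bracket comul Hcb2 hy hu hrepa hrepb,
    counit_bracket 𝒜 mul bracket comul counit Hcz Hcl Hcr Hcm Hcmu Hcb2 ha hb,
    zero_smul] at h0
  simp only [map_sum, map_add, map_smul, TensorProduct.map_tmul, LinearMap.id_coe, id_eq,
    TensorProduct.lift.tmul] at h0
  rw [Finset.sum_congr rfl fun s (_ : s ∈ (Finset.univ : Finset (Fin m))) =>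
    Finset.sum_add_distrib] at h0
  rw [Finset.sum_add_distrib] at h0
  have h1 := eq_neg_of_add_eq_zero_right h0
  rw [h1]
  congr 1
  exact Finset.sum_congr rfl fun s _ => Finset.sum_congr rfl fun t _ => by
    rw [mul_comm (q t) (i - p s)]

include hI in
lemma S_mul_hom (htot : (⨆ i, 𝒜 i) = ⊤)
    (Hcm : ∀ ⦃i : ℤ⦄ ⦃a : A⦄, a ∈ 𝒜 i → comul a ∈ tgrade 𝒜 𝒜 i)
    (Hcz : ∀ ⦃i : ℤ⦄ ⦃a : A⦄, a ∈ 𝒜 i → i ≠ 0 → counit a = 0)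
    (Hcl : ∀ a : A,
      (TensorProduct.lid k A) ((TensorProduct.map counit LinearMap.id) (comul a)) = a)
    (Hcr : ∀ a : A,
      (TensorProduct.rid k A) ((TensorProduct.map LinearMap.id counit) (comul a)) = a)
    (Hcoassoc : ∀ a : A, (TensorProduct.assoc k A A A)
        ((TensorProduct.map comul LinearMap.id) (comul a)) =
      (TensorProduct.map LinearMap.id comul) (comul a))
    (Hmul_assoc : ∀ a b c : A, mul (mul a b) c = mul a (mul b c))
    (Hone_mul : ∀ a, mul one a = a) (Hmul_one : ∀ a, mul a one = a)
    (Hgcomm : ∀ ⦃i j : ℤ⦄ ⦃a b : A⦄, a ∈ 𝒜 i → b ∈ 𝒜 j →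
      mul a b = ((-1 : k) ^ (i * j)) • mul b a)
    (HS_mem : ∀ ⦃i : ℤ⦄ ⦃a : A⦄, a ∈ 𝒜 i → S a ∈ 𝒜 i)
    (Hcmu : ∀ a b : A, counit (mul a b) = counit a * counit b)
    (Hcm2 : ∃ mul₂ : (A ⊗[k] A) →ₗ[k] (A ⊗[k] A) →ₗ[k] (A ⊗[k] A),
      KoszulMulChar' 𝒜 mul mul₂ ∧ ∀ a b : A, comul (mul a b) = mul₂ (comul a) (comul b))
    (HSl : ∀ a : A,
      TensorProduct.lift mul ((TensorProduct.map S LinearMap.id) (comul a)) = counit a • one)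
    (HSr : ∀ a : A,
      TensorProduct.lift mul ((TensorProduct.map LinearMap.id S) (comul a)) = counit a • one) :
    ∀ a b : A, S (mul a b) = mul (S a) (S b) := by
  have h1 := conv_m_Sm 𝒜 hI mul one comul counit S htot Hcm Hcmu Hcm2 HSr
  have h2 := conv_h_m 𝒜 hI mul one comul counit S htot Hcm Hmul_assoc Hone_mul Hgcomm
    HS_mem HSl
  have hmap : S ∘ₗ TensorProduct.lift mul
      = TensorProduct.lift mul ∘ₗ TensorProduct.map S S := by
    calc S ∘ₗ TensorProduct.lift mul
        = conv 𝒜 hI mul comul (EE one counit) (S ∘ₗ TensorProduct.lift mul) :=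
          (conv_unit_left 𝒜 hI mul one comul counit htot Hcm Hcz Hcl Hone_mul _).symm
      _ = conv 𝒜 hI mul comul
            (conv 𝒜 hI mul comul (TensorProduct.lift mul ∘ₗ TensorProduct.map S S)
              (TensorProduct.lift mul)) (S ∘ₗ TensorProduct.lift mul) := by rw [h2]
      _ = conv 𝒜 hI mul comul (TensorProduct.lift mul ∘ₗ TensorProduct.map S S)
            (conv 𝒜 hI mul comul (TensorProduct.lift mul) (S ∘ₗ TensorProduct.lift mul)) :=
          conv_assoc 𝒜 hI mul comul htot Hcm Hcoassoc Hmul_assoc _ _ _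
      _ = conv 𝒜 hI mul comul (TensorProduct.lift mul ∘ₗ TensorProduct.map S S)
            (EE one counit) := by rw [h1]
      _ = TensorProduct.lift mul ∘ₗ TensorProduct.map S S :=
          conv_unit_right 𝒜 hI mul one comul counit htot Hcm Hcz Hcr Hmul_one _
  intro a b
  have := LinearMap.congr_fun hmap (a ⊗ₜ[k] b)
  simpa using this

lemma Kswitch (htot : (⨆ i, 𝒜 i) = ⊤)
    (Hcm : ∀ ⦃i : ℤ⦄ ⦃a : A⦄, a ∈ 𝒜 i → comul a ∈ tgrade 𝒜 𝒜 i)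
    (Hmul_assoc : ∀ a b c : A, mul (mul a b) c = mul a (mul b c))
    (Hanti' : ∀ ⦃i j : ℤ⦄ ⦃a b : A⦄, a ∈ 𝒜 i → b ∈ 𝒜 j →
      bracket a b = -(((-1 : k) ^ (i * j)) • bracket b a))
    (Hleib' : ∀ ⦃i j : ℤ⦄ ⦃a b : A⦄ (c : A), a ∈ 𝒜 i → b ∈ 𝒜 j →
      bracket a (mul b c) = mul (bracket a b) c + ((-1 : k) ^ (i * j)) • mul b (bracket a c))
    (Hmul_mem : ∀ ⦃i j : ℤ⦄ ⦃a b : A⦄, a ∈ 𝒜 i → b ∈ 𝒜 j → mul a b ∈ 𝒜 (i + j))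
    (HS_mem : ∀ ⦃i : ℤ⦄ ⦃a : A⦄, a ∈ 𝒜 i → S a ∈ 𝒜 i)
    (HSr : ∀ a : A,
      TensorProduct.lift mul ((TensorProduct.map LinearMap.id S) (comul a)) = counit a • one)
    (hbr1L : ∀ c, bracket one c = 0) (hbr1R : ∀ c, bracket c one = 0)
    (HS_mul : ∀ a b : A, S (mul a b) = mul (S a) (S b)) :
    conv 𝒜 hI mul comul (TensorProduct.lift bracket) (S ∘ₗ TensorProduct.lift mul)
      = conv 𝒜 hI mul comul (TensorProduct.lift mul)
          (TensorProduct.lift bracket ∘ₗ TensorProduct.map S S) := by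
  refine ext_homog 𝒜 htot ?_
  intro i j a b ha hb
  obtain ⟨m, p, x, y, hx, hy, hrepa⟩ := crep 𝒜 comul Hcm ha
  obtain ⟨m', q, u, v, hu, hv, hrepb⟩ := crep 𝒜 comul Hcm hb
  rw [conv_tmul 𝒜 hI mul comul _ _ hy hu hrepa hrepb,
    conv_tmul 𝒜 hI mul comul _ _ hy hu hrepa hrepb]
  simp only [LinearMap.comp_apply, TensorProduct.lift.tmul, TensorProduct.map_tmul]
  calc ∑ s, ∑ t, ((-1 : k) ^ ((i - p s) * q t)) •
        mul (bracket (x s) (u t)) (S (mul (y s) (v t)))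
      = ∑ t, ∑ s, ((-1 : k) ^ ((i - p s) * q t)) •
          mul (mul (bracket (x s) (u t)) (S (y s))) (S (v t)) := by
        rw [Finset.sum_congr rfl fun s (_ : s ∈ (Finset.univ : Finset (Fin m))) =>
          Finset.sum_congr rfl fun t _ => by
            rw [HS_mul (y s) (v t), ← Hmul_assoc]]
        exact Finset.sum_comm
    _ = -∑ t, mul (∑ s, mul (x s) (bracket (S (y s)) (u t))) (S (v t)) := by
        have inner : ∀ t : Fin m', ∑ s, ((-1 : k) ^ ((i - p s) * q t)) •
            mul (mul (bracket (x s) (u t)) (S (y s))) (S (v t))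
            = -(mul (∑ s, mul (x s) (bracket (S (y s)) (u t))) (S (v t))) := by
          intro t
          have hD := D1 𝒜 mul one bracket comul counit S Hanti' Hleib' Hmul_mem HS_mem
            HSr hbr1L ha (hu t) hx hy hrepa
          calc ∑ s, ((-1 : k) ^ ((i - p s) * q t)) •
              mul (mul (bracket (x s) (u t)) (S (y s))) (S (v t))
              = mul (∑ s, ((-1 : k) ^ ((i - p s) * q t)) •
                  mul (bracket (x s) (u t)) (S (y s))) (S (v t)) := by
                simp only [map_sum, LinearMap.sum_apply, map_smul, LinearMap.smul_apply,
                  LinearMap.map_smul₂]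
            _ = mul (-(∑ s, mul (x s) (bracket (S (y s)) (u t)))) (S (v t)) := by rw [hD]
            _ = -(mul (∑ s, mul (x s) (bracket (S (y s)) (u t))) (S (v t))) := by
                simp
        rw [Finset.sum_congr rfl fun t _ => inner t, ← Finset.sum_neg_distrib]
    _ = -∑ s, mul (x s) (∑ t, mul (bracket (S (y s)) (u t)) (S (v t))) := by
        congr 1
        rw [Finset.sum_congr rfl fun t (_ : t ∈ (Finset.univ : Finset (Fin m'))) => by
          simp only [map_sum, LinearMap.sum_apply]
          exact Finset.sum_congr rfl fun s _ => Hmul_assoc (x s) _ (S (v t))]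
        rw [Finset.sum_comm]
        exact Finset.sum_congr rfl fun s _ => (map_sum (mul (x s)) _ _).symm
    _ = ∑ s, mul (x s) (∑ t, ((-1 : k) ^ ((i - p s) * q t)) •
          mul (u t) (bracket (S (y s)) (S (v t)))) := by
        have hD2 : ∀ s : Fin m, ∑ t, mul (bracket (S (y s)) (u t)) (S (v t))
            = -∑ t, ((-1 : k) ^ ((i - p s) * q t)) •
                mul (u t) (bracket (S (y s)) (S (v t))) :=
          fun s => D2 𝒜 mul one bracket comul counit S Hleib' HS_mem HSr hbr1R hb
            (HS_mem (hy s)) hu hv hrepb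
        rw [Finset.sum_congr rfl fun s (_ : s ∈ (Finset.univ : Finset (Fin m))) => by
          rw [hD2 s, map_neg]]
        rw [Finset.sum_neg_distrib, neg_neg]
    _ = ∑ s, ∑ t, ((-1 : k) ^ ((i - p s) * q t)) •
          mul (mul (x s) (u t)) (bracket (S (y s)) (S (v t))) := by
        refine Finset.sum_congr rfl fun s _ => ?_
        rw [map_sum]
        refine Finset.sum_congr rfl fun t _ => ?_
        rw [map_smul, ← Hmul_assoc]


include hI in
lemma S_bracket (htot : (⨆ i, 𝒜 i) = ⊤)
    (Hcm : ∀ ⦃i : ℤ⦄ ⦃a : A⦄, a ∈ 𝒜 i → comul a ∈ tgrade 𝒜 𝒜 i)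
    (Hcz : ∀ ⦃i : ℤ⦄ ⦃a : A⦄, a ∈ 𝒜 i → i ≠ 0 → counit a = 0)
    (Hcl : ∀ a : A,
      (TensorProduct.lid k A) ((TensorProduct.map counit LinearMap.id) (comul a)) = a)
    (Hcr : ∀ a : A,
      (TensorProduct.rid k A) ((TensorProduct.map LinearMap.id counit) (comul a)) = a)
    (Hcoassoc : ∀ a : A, (TensorProduct.assoc k A A A)
        ((TensorProduct.map comul LinearMap.id) (comul a)) =
      (TensorProduct.map LinearMap.id comul) (comul a))
    (Hmul_assoc : ∀ a b c : A, mul (mul a b) c = mul a (mul b c))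
    (Hone_mul : ∀ a, mul one a = a) (Hmul_one : ∀ a, mul a one = a)
    (Hone_mem : one ∈ 𝒜 0)
    (Hmul_mem : ∀ ⦃i j : ℤ⦄ ⦃a b : A⦄, a ∈ 𝒜 i → b ∈ 𝒜 j → mul a b ∈ 𝒜 (i + j))
    (Hgcomm : ∀ ⦃i j : ℤ⦄ ⦃a b : A⦄, a ∈ 𝒜 i → b ∈ 𝒜 j →
      mul a b = ((-1 : k) ^ (i * j)) • mul b a)
    (Hanti' : ∀ ⦃i j : ℤ⦄ ⦃a b : A⦄, a ∈ 𝒜 i → b ∈ 𝒜 j →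
      bracket a b = -(((-1 : k) ^ (i * j)) • bracket b a))
    (Hleib' : ∀ ⦃i j : ℤ⦄ ⦃a b : A⦄ (c : A), a ∈ 𝒜 i → b ∈ 𝒜 j →
      bracket a (mul b c) = mul (bracket a b) c + ((-1 : k) ^ (i * j)) • mul b (bracket a c))
    (HS_mem : ∀ ⦃i : ℤ⦄ ⦃a : A⦄, a ∈ 𝒜 i → S a ∈ 𝒜 i)
    (Hcmu : ∀ a b : A, counit (mul a b) = counit a * counit b)
    (Hcm2 : ∃ mul₂ : (A ⊗[k] A) →ₗ[k] (A ⊗[k] A) →ₗ[k] (A ⊗[k] A),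
      KoszulMulChar' 𝒜 mul mul₂ ∧ ∀ a b : A, comul (mul a b) = mul₂ (comul a) (comul b))
    (Hcb2 : ∃ br₂ : (A ⊗[k] A) →ₗ[k] (A ⊗[k] A) →ₗ[k] (A ⊗[k] A),
      KoszulBracketChar' 𝒜 mul bracket br₂ ∧
        ∀ a b : A, comul (bracket a b) = br₂ (comul a) (comul b))
    (HSl : ∀ a : A,
      TensorProduct.lift mul ((TensorProduct.map S LinearMap.id) (comul a)) = counit a • one)
    (HSr : ∀ a : A,
      TensorProduct.lift mul ((TensorProduct.map LinearMap.id S) (comul a)) = counit a • one) :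
    ∀ a b : A, S (bracket a b) = -(bracket (S a) (S b)) := by
  have hbr1L : ∀ c, bracket one c = 0 :=
    br_one_left 𝒜 mul one bracket Hanti' Hleib' htot Hone_mem Hmul_one Hone_mul
  have hbr1R : ∀ c, bracket c one = 0 :=
    br_one_right 𝒜 mul one bracket Hleib' htot Hone_mem Hmul_one Hone_mul
  have HS_mul := S_mul_hom 𝒜 hI mul one comul counit S htot Hcm Hcz Hcl Hcr Hcoassoc
    Hmul_assoc Hone_mul Hmul_one Hgcomm HS_mem Hcmu Hcm2 HSl HSr
  have hSm_m := conv_Sm_m 𝒜 hI mul one comul counit S htot Hcm Hcmu Hcm2 HSl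
  have hrel := rel1 𝒜 hI mul one bracket comul counit S htot Hcm Hcz Hcl Hcr Hcmu Hcb2 HSr
  have hK := Kswitch 𝒜 hI mul one bracket comul counit S htot Hcm Hmul_assoc Hanti' Hleib'
    Hmul_mem HS_mem HSr hbr1L hbr1R HS_mul
  have hchain : S ∘ₗ TensorProduct.lift bracket
      = -(TensorProduct.lift bracket ∘ₗ TensorProduct.map S S) := by
    calc S ∘ₗ TensorProduct.lift bracket
        = conv 𝒜 hI mul comul (EE one counit) (S ∘ₗ TensorProduct.lift bracket) :=
          (conv_unit_left 𝒜 hI mul one comul counit htot Hcm Hcz Hcl Hone_mul _).symm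
      _ = conv 𝒜 hI mul comul
            (conv 𝒜 hI mul comul (S ∘ₗ TensorProduct.lift mul) (TensorProduct.lift mul))
            (S ∘ₗ TensorProduct.lift bracket) := by rw [hSm_m]
      _ = conv 𝒜 hI mul comul (S ∘ₗ TensorProduct.lift mul)
            (conv 𝒜 hI mul comul (TensorProduct.lift mul)
              (S ∘ₗ TensorProduct.lift bracket)) :=
          conv_assoc 𝒜 hI mul comul htot Hcm Hcoassoc Hmul_assoc _ _ _
      _ = conv 𝒜 hI mul comul (S ∘ₗ TensorProduct.lift mul)
            (-(conv 𝒜 hI mul comul (TensorProduct.lift bracket)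
              (S ∘ₗ TensorProduct.lift mul))) := by rw [hrel]
      _ = conv 𝒜 hI mul comul (S ∘ₗ TensorProduct.lift mul)
            (-(conv 𝒜 hI mul comul (TensorProduct.lift mul)
              (TensorProduct.lift bracket ∘ₗ TensorProduct.map S S))) := by rw [hK]
      _ = -(conv 𝒜 hI mul comul (S ∘ₗ TensorProduct.lift mul)
            (conv 𝒜 hI mul comul (TensorProduct.lift mul)
              (TensorProduct.lift bracket ∘ₗ TensorProduct.map S S))) :=
          conv_neg_right 𝒜 hI mul comul _ _
      _ = -(conv 𝒜 hI mul comul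
            (conv 𝒜 hI mul comul (S ∘ₗ TensorProduct.lift mul) (TensorProduct.lift mul))
            (TensorProduct.lift bracket ∘ₗ TensorProduct.map S S)) := by
          rw [conv_assoc 𝒜 hI mul comul htot Hcm Hcoassoc Hmul_assoc]
      _ = -(conv 𝒜 hI mul comul (EE one counit)
            (TensorProduct.lift bracket ∘ₗ TensorProduct.map S S)) := by rw [hSm_m]
      _ = -(TensorProduct.lift bracket ∘ₗ TensorProduct.map S S) := by
          rw [conv_unit_left 𝒜 hI mul one comul counit htot Hcm Hcz Hcl Hone_mul]
  intro a b
  have := LinearMap.congr_fun hchain (a ⊗ₜ[k] b)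
  simpa using this

end Core


end AntipodeMachinery

/-- The antipode of a DG Poisson Hopf algebra (bracket of degree 0) is a
graded Poisson anti-homomorphism: `S({a,b}) = (-1)^{|a||b|}{S(b), S(a)} = -{S(a), S(b)}`. -/
theorem antipode_poisson_anti_hom {k : Type} [Field k]
    (A : Type) [AddCommGroup A] [Module k A]
    (𝒜 : ℤ → Submodule k A) (mul : A →ₗ[k] A →ₗ[k] A) (one : A)
    (bracket : A →ₗ[k] A →ₗ[k] A) (d : A →ₗ[k] A)
    (comul : A →ₗ[k] A ⊗[k] A) (counit : A →ₗ[k] k) (S : A →ₗ[k] A)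
    (hA : IsDGPoissonHopf k A 𝒜 mul one bracket d comul counit S) :
    ∀ ⦃i j : ℤ⦄ ⦃a b : A⦄, a ∈ 𝒜 i → b ∈ 𝒜 j →
      S (bracket a b) = ((-1 : k) ^ (i * j)) • bracket (S b) (S a) ∧
      S (bracket a b) = -(bracket (S a) (S b)) := by
  have halg := hA.toPoissonBialg.poisson.toIsDGAlgebra.toIsGradedAlgebra
  have hco := hA.toPoissonBialg.dgbialg.bialg.coalg
  have hbi := hA.toPoissonBialg.dgbialg.bialg
  have hI : DirectSum.IsInternal fun i => 𝒜 i :=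
    DirectSum.isInternal_submodule_of_iSupIndep_of_iSup_eq_top halg.indep halg.total
  have Hanti' : ∀ ⦃i j : ℤ⦄ ⦃a b : A⦄, a ∈ 𝒜 i → b ∈ 𝒜 j →
      bracket a b = -(((-1 : k) ^ (i * j)) • bracket b a) := fun i j a b ha hb => by
    simpa using hA.toPoissonBialg.poisson.bracket_antisymm ha hb
  have Hleib' : ∀ ⦃i j : ℤ⦄ ⦃a b : A⦄ (c : A), a ∈ 𝒜 i → b ∈ 𝒜 j →
      bracket a (mul b c) = mul (bracket a b) c + ((-1 : k) ^ (i * j)) • mul b (bracket a c) :=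
    fun i j a b c ha hb => by
      simpa using hA.toPoissonBialg.poisson.bracket_leibniz c ha hb
  have Hcm2 : ∃ mul₂ : (A ⊗[k] A) →ₗ[k] (A ⊗[k] A) →ₗ[k] (A ⊗[k] A),
      KoszulMulChar' 𝒜 mul mul₂ ∧ ∀ a b : A, comul (mul a b) = mul₂ (comul a) (comul b) := by
    obtain ⟨μ, hc, he⟩ := hbi.comul_mul
    exact ⟨μ, fun i j a a' b b' h1 h2 => hc a b' h1 h2, he⟩
  have Hcb2 : ∃ br₂ : (A ⊗[k] A) →ₗ[k] (A ⊗[k] A) →ₗ[k] (A ⊗[k] A),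
      KoszulBracketChar' 𝒜 mul bracket br₂ ∧
        ∀ a b : A, comul (bracket a b) = br₂ (comul a) (comul b) := by
    obtain ⟨β, hc, he⟩ := hA.toPoissonBialg.comul_bracket
    exact ⟨β, fun i j a a' b b' h1 h2 => hc a b' h1 h2, he⟩
  have key := S_bracket 𝒜 hI mul one bracket comul counit S halg.total hco.comul_mem
    hco.counit_zero hco.counit_comul_left hco.counit_comul_right hco.coassoc
    halg.mul_assoc halg.one_mul halg.mul_one halg.one_mem halg.mul_mem
    hA.toPoissonBialg.poisson.gcomm Hanti' Hleib' hA.antipode_mem hbi.counit_mul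
    Hcm2 Hcb2 hA.antipode_left hA.antipode_right
  intro i j a b ha hb
  have h2 := key a b
  refine ⟨?_, h2⟩
  have hanti := Hanti' (hA.antipode_mem hb) (hA.antipode_mem ha)
  rw [hanti, smul_neg, smul_smul, zpow_neg_one_mul,
    show i * j + j * i = 0 + 2 * (i * j) by ring, zpow_reduce, zpow_zero, one_smul, h2]

end DGPH
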